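/- arXiv:1103.4341 — 3 statements merged into one kernel-verified Lean document; each statement's English description precedes it below -/
import Mathlib

section
/- Let G be a K_{2,2,2}-free hole-edge-disjoint simple graph and let C be a hole of G. Then G has no C-avoiding path between any two non-adjacent vertices of C. -/
open SimpleGraph

universe u

/-- A *hole* of a simple graph: an induced (chordless) cycle of length at least 4. -/
def IsHole {V : Type u} (G : SimpleGraph V) {v : V} (c : G.Walk v v) : Prop :=
  c.IsCycle ∧ 4 ≤ c.length ∧
    ∀ x ∈ c.support, ∀ y ∈ c.support, G.Adj x y → s(x, y) ∈ c.edges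

/-- A graph is *chordal* if it has no hole. -/
def Chordal {V : Type u} (G : SimpleGraph V) : Prop :=
  ∀ (v : V) (c : G.Walk v v), ¬ IsHole G c

/-- A graph is *hole-edge-disjoint* if any two of its holes either have the same edge set
or share no edge. -/
def HoleEdgeDisjoint {V : Type u} (G : SimpleGraph V) : Prop :=
  ∀ (u v : V) (c₁ : G.Walk u u) (c₂ : G.Walk v v), IsHole G c₁ → IsHole G c₂ →
    ({e | e ∈ c₁.edges} = {e | e ∈ c₂.edges} ∨ ∀ e ∈ c₁.edges, e ∉ c₂.edges)

/-- The complete tripartite graph `K_{2,2,2}`. -/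
def K222 : SimpleGraph (Fin 3 × Fin 2) where
  Adj a b := a.1 ≠ b.1
  symm := ⟨fun _ _ h => Ne.symm h⟩
  loopless := ⟨fun _ h => h rfl⟩

/-- A graph is `K_{2,2,2}`-free if it has no induced subgraph isomorphic to `K_{2,2,2}`. -/
def K222Free {V : Type u} (G : SimpleGraph V) : Prop :=
  ¬ ∃ f : Fin 3 × Fin 2 → V, Function.Injective f ∧
      ∀ a b, G.Adj (f a) (f b) ↔ K222.Adj a b

/-- `X_C`: the set of vertices adjacent to every vertex of the hole `C`. -/
def holeNbrs {V : Type u} (G : SimpleGraph V) {v : V} (c : G.Walk v v) : Set V :=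
  {x | ∀ y ∈ c.support, G.Adj x y}

/-- `V(C) ∪ X_C`. -/
def avoidSet {V : Type u} (G : SimpleGraph V) {v : V} (c : G.Walk v v) : Set V :=
  {x | x ∈ c.support} ∪ holeNbrs G c

/-- A `C`-avoiding path: a path none of whose internal vertices lie in `V(C) ∪ X_C`,
and, if it has length 1, at least one of its two vertices is not in `V(C) ∪ X_C`. -/
def IsCAvoidingPath {V : Type u} (G : SimpleGraph V) {v : V} (c : G.Walk v v)
    {a b : V} (W : G.Walk a b) : Prop :=
  W.IsPath ∧
    (∀ x ∈ W.support, x ≠ a → x ≠ b → x ∉ avoidSet G c) ∧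
    (W.length = 1 → a ∉ avoidSet G c ∨ b ∉ avoidSet G c)

/-- `S_{C,e}` for `e = ab`: all internal vertices of `C`-avoiding `(a,b)`-paths. -/
def Sset {V : Type u} (G : SimpleGraph V) {v : V} (c : G.Walk v v) (a b : V) : Set V :=
  {w | ∃ W : G.Walk a b, IsCAvoidingPath G c W ∧ w ∈ W.support ∧ w ≠ a ∧ w ≠ b}

/-- `T_{C,e}` for `e = ab`: all vertices `w` such that `a w b` is a `C`-avoiding path. -/
def Tset {V : Type u} (G : SimpleGraph V) {v : V} (c : G.Walk v v) (a b : V) : Set V :=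
  {w | ∃ (h₁ : G.Adj a w) (h₂ : G.Adj w b),
      IsCAvoidingPath G c (Walk.cons h₁ (Walk.cons h₂ Walk.nil))}

/-- `X_{C,e} = X_C ∪ {a, b}` for `e = ab`. -/
def Xce {V : Type u} (G : SimpleGraph V) {v : V} (c : G.Walk v v) (a b : V) : Set V :=
  holeNbrs G c ∪ {a, b}

/-- The number of connected components of a graph. -/
noncomputable def numComponents {V : Type u} (G : SimpleGraph V) : ℕ :=
  Nat.card G.ConnectedComponent

/-- `X` is a vertex cut of `G` if `G − X` has more connected components than `G`. -/
def IsVertexCut {V : Type u} (G : SimpleGraph V) (X : Set V) : Prop :=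
  numComponents G < numComponents (G.induce Xᶜ)

/-- A clique cut: a vertex cut which is a clique. -/
def IsCliqueCut {V : Type u} (G : SimpleGraph V) (X : Set V) : Prop :=
  G.IsClique X ∧ IsVertexCut G X

/-- `U` is a union of connected components of `G − X`. -/
def IsComponentUnion {V : Type u} (G : SimpleGraph V) (X U : Set V) : Prop :=
  U ⊆ Xᶜ ∧ ∀ a b : ↥(Xᶜ), (G.induce Xᶜ).Reachable a b → ((a : V) ∈ U ↔ (b : V) ∈ U)

/-- A chordal cut: a clique cut `X` such that there is a (nonempty) union `U` of
connected components of `G − X` with `G[U ∪ X]` chordal. -/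
def IsChordalCut {V : Type u} (G : SimpleGraph V) (X : Set V) : Prop :=
  IsCliqueCut G X ∧
    ∃ U : Set V, U.Nonempty ∧ IsComponentUnion G X U ∧ Chordal (G.induce (U ∪ X))

/-- `x` lies in `Q_{C,e}`, the connected component of `G − X_{C,e}` containing
`V(C) \ {a, b}` (for `e = ab`). -/
def InQ {V : Type u} (G : SimpleGraph V) {v : V} (c : G.Walk v v) (a b : V) (x : V) : Prop :=
  ∃ (hx : x ∈ (Xce G c a b)ᶜ) (y : V) (hy : y ∈ (Xce G c a b)ᶜ),
    y ∈ c.support ∧ y ≠ a ∧ y ≠ b ∧ (G.induce (Xce G c a b)ᶜ).Reachable ⟨x, hx⟩ ⟨y, hy⟩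

/-- The vertex set of `U_{C,e}`: the union of the connected components of
`G − X_{C,e}` other than `Q_{C,e}` containing a vertex of `T_{C,e}`. -/
def Uset {V : Type u} (G : SimpleGraph V) {v : V} (c : G.Walk v v) (a b : V) : Set V :=
  {x | ∃ hx : x ∈ (Xce G c a b)ᶜ, ¬ InQ G c a b x ∧
      ∃ (t : V) (ht : t ∈ (Xce G c a b)ᶜ), t ∈ Tset G c a b ∧ ¬ InQ G c a b t ∧
        (G.induce (Xce G c a b)ᶜ).Reachable ⟨x, hx⟩ ⟨t, ht⟩}

/-- `G` has the chordal property: there are a hole `C` and an edge `e` of `C` such that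
`G[V(U_{C,e}) ∪ X_{C,e}]` is chordal. -/
def HasChordalProperty {V : Type u} (G : SimpleGraph V) : Prop :=
  ∃ (v : V) (c : G.Walk v v) (a b : V), IsHole G c ∧ s(a, b) ∈ c.edges ∧
    Chordal (G.induce (Uset G c a b ∪ Xce G c a b))

/-- `h(G)`: the number of holes of `G`, counted by their edge sets. -/
noncomputable def holeCount {V : Type u} (G : SimpleGraph V) : ℕ :=
  Nat.card {s : Set (Sym2 V) // ∃ (v : V) (c : G.Walk v v), IsHole G c ∧ s = {e | e ∈ c.edges}}

/-- `G` together with `k` added isolated vertices. -/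
def addIsolated {V : Type u} (G : SimpleGraph V) (k : ℕ) : SimpleGraph (V ⊕ Fin k) where
  Adj a b := ∃ x y, G.Adj x y ∧ a = Sum.inl x ∧ b = Sum.inl y
  symm := by
    constructor
    rintro a b ⟨x, y, h, rfl, rfl⟩
    exact ⟨y, x, h.symm, rfl, rfl⟩
  loopless := by
    constructor
    rintro a ⟨x, y, h, rfl, hy⟩
    obtain rfl := Sum.inl.inj hy
    exact G.irrefl h

/-- A digraph (given by its arc relation) is acyclic: it has no directed closed walk. -/
def IsAcyclicDigraph {α : Type u} (r : α → α → Prop) : Prop :=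
  ∀ x, ¬ Relation.TransGen r x x

/-- `H` is the competition graph of some acyclic digraph: distinct vertices are adjacent
iff they have a common out-neighbour (prey). -/
def IsCompetitionGraphOfAcyclicDigraph {α : Type u} (H : SimpleGraph α) : Prop :=
  ∃ r : α → α → Prop, IsAcyclicDigraph r ∧
    ∀ a b : α, H.Adj a b ↔ a ≠ b ∧ ∃ x, r a x ∧ r b x

/-- The competition number `k(G)`: the least `k` such that `G` together with `k` isolated
vertices is the competition graph of an acyclic digraph. -/
noncomputable def compNumber {V : Type u} (G : SimpleGraph V) : ℕ :=
  sInf {k | IsCompetitionGraphOfAcyclicDigraph (addIsolated G k)}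

section Aux
namespace CAvoid

set_option linter.unusedSectionVars false

variable {V : Type u} {G : SimpleGraph V} [DecidableEq V]

open SimpleGraph.Walk

lemma takeUntil_start {x y : V} (q : G.Walk x y) (h : x ∈ q.support) :
    q.takeUntil x h = Walk.nil := by
  cases q with
  | nil => rfl
  | cons r p => simp [Walk.takeUntil]

lemma dropUntil_start {x y : V} (q : G.Walk x y) (h : x ∈ q.support) :
    q.dropUntil x h = q := by
  cases q with
  | nil => rfl
  | cons r p => simp [Walk.dropUntil]

lemma takeUntil_cons {x z y u : V} (r : G.Adj x z) (p : G.Walk z y)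
    (hu : u ∈ (Walk.cons r p).support) (hxu : x ≠ u) :
    (Walk.cons r p).takeUntil u hu
      = Walk.cons r (p.takeUntil u (by
          rcases (Walk.mem_support_iff _).mp hu with h | h
          · exact absurd h.symm hxu
          · simpa using h)) := by
  simp [Walk.takeUntil, hxu]

lemma dropUntil_cons {x z y u : V} (r : G.Adj x z) (p : G.Walk z y)
    (hu : u ∈ (Walk.cons r p).support) (hxu : x ≠ u) :
    (Walk.cons r p).dropUntil u hu
      = p.dropUntil u (by
          rcases (Walk.mem_support_iff _).mp hu with h | h
          · exact absurd h.symm hxu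
          · simpa using h) := by
  simp [Walk.dropUntil, hxu]

lemma edge_at_start {x z y : V} (r : G.Adj x z) (p : G.Walk z y)
    (hq : (Walk.cons r p).IsPath) {e : Sym2 V}
    (he : e ∈ (Walk.cons r p).edges) (hx : x ∈ e) : e = s(x, z) := by
  rw [Walk.edges_cons, List.mem_cons] at he
  rcases he with rfl | he
  · rfl
  · exfalso
    rcases Sym2.mem_iff_exists.mp hx with ⟨w, rfl⟩
    exact ((Walk.cons_isPath_iff r p).mp hq).2 (p.fst_mem_support_of_mem_edges he)

lemma edge_at_start_unique {x y : V} {q : G.Walk x y} (hq : q.IsPath)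
    {e e' : Sym2 V} (he : e ∈ q.edges) (he' : e' ∈ q.edges)
    (hx : x ∈ e) (hx' : x ∈ e') : e = e' := by
  cases q with
  | nil => simp at he
  | cons r p =>
    rw [edge_at_start r p hq he hx, edge_at_start r p hq he' hx']

lemma edge_at_end_unique {x y : V} {q : G.Walk x y} (hq : q.IsPath)
    {e e' : Sym2 V} (he : e ∈ q.edges) (he' : e' ∈ q.edges)
    (hy : y ∈ e) (hy' : y ∈ e') : e = e' := by
  have h1 : e ∈ q.reverse.edges := by rw [Walk.edges_reverse, List.mem_reverse]; exact he
  have h2 : e' ∈ q.reverse.edges := by rw [Walk.edges_reverse, List.mem_reverse]; exact he'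
  exact edge_at_start_unique hq.reverse h1 h2 hy hy'

lemma exists_edge_at_start {x y : V} (q : G.Walk x y) (hxy : x ≠ y) :
    ∃ z, G.Adj x z ∧ s(x, z) ∈ q.edges := by
  cases q with
  | nil => exact absurd rfl hxy
  | cons r p => exact ⟨_, r, by simp⟩

lemma exists_edge_at_end {x y : V} (q : G.Walk x y) (hxy : x ≠ y) :
    ∃ z, G.Adj y z ∧ s(y, z) ∈ q.edges := by
  obtain ⟨z, h, hz⟩ := exists_edge_at_start q.reverse (Ne.symm hxy)
  refine ⟨z, h, ?_⟩
  rw [Walk.edges_reverse, List.mem_reverse] at hz; exact hz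

lemma hole_edges_at {v z : V} {c : G.Walk v v} (hc : IsHole G c) (hz : z ∈ c.support) :
    ∃ z₁ z₂, z₁ ≠ z₂ ∧ s(z, z₁) ∈ c.edges ∧ s(z, z₂) ∈ c.edges ∧
      ∀ e ∈ c.edges, z ∈ e → e = s(z, z₁) ∨ e = s(z, z₂) := by
  obtain ⟨hcyc, hlen4, _⟩ := hc
  have hrot := hcyc.rotate hz
  have hmemE : ∀ e : Sym2 V, e ∈ (c.rotate z hz).edges ↔ e ∈ c.edges :=
    fun e => (c.rotate_edges z hz).mem_iff
  have hlenrot : (c.rotate z hz).length = c.length := by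
    have h1 := congrArg Walk.length (c.take_spec hz)
    rw [Walk.length_append] at h1
    show ((c.dropUntil z hz).append (c.takeUntil z hz)).length = c.length
    rw [Walk.length_append]; omega
  have hnotnil : ¬ (c.rotate z hz).Nil := by
    rw [Walk.nil_iff_length_eq, hlenrot]; omega
  obtain ⟨w1, r, p, hEq⟩ := Walk.not_nil_iff.mp hnotnil
  have hsupnodup := hrot.support_nodup
  rw [hEq] at hsupnodup
  have hpPath : p.IsPath := Walk.IsPath.mk' (by simpa using hsupnodup)
  have hplen : p.length + 1 = c.length := by
    rw [← hlenrot, hEq, Walk.length_cons]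
  have hw1z : w1 ≠ z := by
    intro hcontra
    subst hcontra
    have : p = Walk.nil := Walk.isPath_iff_eq_nil.mp hpPath
    rw [this] at hplen
    simp at hplen; omega
  obtain ⟨z₂, hadj₂, he₂⟩ := exists_edge_at_end p hw1z
  have hE₁ : s(z, w1) ∈ c.edges := by
    rw [← hmemE, hEq, Walk.edges_cons]; exact List.mem_cons_self
  have hE₂ : s(z, z₂) ∈ c.edges := by
    rw [← hmemE, hEq, Walk.edges_cons]; exact List.mem_cons_of_mem _ he₂
  have htrail := hrot.isCircuit.isTrail.edges_nodup
  rw [hEq, Walk.edges_cons] at htrail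
  have hz12 : w1 ≠ z₂ := by
    intro hcontra
    subst hcontra
    exact (List.nodup_cons.mp htrail).1 he₂
  refine ⟨w1, z₂, hz12, hE₁, hE₂, ?_⟩
  intro e he hze
  rw [← hmemE, hEq, Walk.edges_cons, List.mem_cons] at he
  rcases he with rfl | he
  · left; rfl
  · right
    exact edge_at_end_unique hpPath he he₂ hze (Sym2.mem_mk_left z z₂)

lemma subarc_interior_edges {v x y : V} {c : G.Walk v v} (hc : IsHole G c)
    {R : G.Walk x y} (hR : R.IsPath) (hRE : ∀ e ∈ R.edges, e ∈ c.edges)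
    {z : V} (hzR : z ∈ R.support) (hzx : z ≠ x) (hzy : z ≠ y) (hzc : z ∈ c.support) :
    ∀ e ∈ c.edges, z ∈ e → e ∈ R.edges := by
  have hTpath : (R.takeUntil z hzR).IsPath := hR.takeUntil hzR
  have hDpath : (R.dropUntil z hzR).IsPath := hR.dropUntil hzR
  obtain ⟨t₂, hadj1, he₁⟩ := exists_edge_at_end (R.takeUntil z hzR) (Ne.symm hzx)
  obtain ⟨d₂, hadj2, he₂⟩ := exists_edge_at_start (R.dropUntil z hzR) hzy
  have hRsplit : R.edges = (R.takeUntil z hzR).edges ++ (R.dropUntil z hzR).edges := by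
    conv_lhs => rw [← R.take_spec hzR]
    rw [Walk.edges_append]
  have hmemR₁ : s(z, t₂) ∈ R.edges := by rw [hRsplit]; exact List.mem_append_left _ he₁
  have hmemR₂ : s(z, d₂) ∈ R.edges := by rw [hRsplit]; exact List.mem_append_right _ he₂
  have hdisj : s(z, t₂) ≠ s(z, d₂) := by
    intro hcontra
    have hnodup := hR.isTrail.edges_nodup
    rw [hRsplit] at hnodup
    exact (List.disjoint_of_nodup_append hnodup) he₁ (hcontra ▸ he₂)
  obtain ⟨z₁, z₂, hz12, hE₁, hE₂, huniq⟩ := hole_edges_at hc hzc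
  have hA := huniq _ (hRE _ hmemR₁) (Sym2.mem_mk_left _ _)
  have hB := huniq _ (hRE _ hmemR₂) (Sym2.mem_mk_left _ _)
  intro e he hze
  rcases huniq e he hze with rfl | rfl
  · rcases hA with hA | hA
    · rw [← hA]; exact hmemR₁
    · rcases hB with hB | hB
      · rw [← hB]; exact hmemR₂
      · exact absurd (hA.trans hB.symm) hdisj
  · rcases hB with hB | hB
    · rcases hA with hA | hA
      · exact absurd (hA.trans hB.symm) hdisj
      · rw [← hA]; exact hmemR₁
    · rw [← hB]; exact hmemR₂

lemma subarc_edge {v x y : V} {c : G.Walk v v} (hc : IsHole G c)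
    {R : G.Walk x y} (hR : R.IsPath) (hRE : ∀ e ∈ R.edges, e ∈ c.edges)
    {z₁ z₂ : V} (h₁ : z₁ ∈ R.support) (h₂ : z₂ ∈ R.support)
    (h₁c : z₁ ∈ c.support) (h₂c : z₂ ∈ c.support)
    (hadj : G.Adj z₁ z₂) : s(z₁, z₂) ∈ R.edges ∨ s(z₁, z₂) = s(x, y) := by
  have he : s(z₁, z₂) ∈ c.edges := hc.2.2 _ h₁c _ h₂c hadj
  by_cases hint1 : z₁ ≠ x ∧ z₁ ≠ y
  · exact Or.inl (subarc_interior_edges hc hR hRE h₁ hint1.1 hint1.2 h₁c _ he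
      (Sym2.mem_mk_left _ _))
  by_cases hint2 : z₂ ≠ x ∧ z₂ ≠ y
  · exact Or.inl (subarc_interior_edges hc hR hRE h₂ hint2.1 hint2.2 h₂c _ he
      (Sym2.mem_mk_right _ _))
  push_neg at hint1 hint2
  by_cases h1x : z₁ = x
  · by_cases h2y : z₂ = y
    · rw [h1x, h2y]; exact Or.inr rfl
    · have h2x : z₂ = x := by
        by_cases h : z₂ = x
        · exact h
        · exact absurd (hint2 h) h2y
      exact absurd (h1x.trans h2x.symm) hadj.ne
  · have h1y : z₁ = y := hint1 h1x
    by_cases h2x : z₂ = x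
    · rw [h1y, h2x]; exact Or.inr Sym2.eq_swap
    · have h2y : z₂ = y := hint2 h2x
      exact absurd (h1y.trans h2y.symm) hadj.ne

lemma support_takeUntil_dropUntil_eq {x y u : V} (q : G.Walk x y) (hu : u ∈ q.support) :
    q.support = (q.takeUntil u hu).support ++ (q.dropUntil u hu).support.tail := by
  conv_lhs => rw [← q.take_spec hu]
  rw [Walk.support_append]

lemma mem_take_drop_eq {x y u z : V} {q : G.Walk x y} (hq : q.IsPath) (hu : u ∈ q.support)
    (h₁ : z ∈ (q.takeUntil u hu).support) (h₂ : z ∈ (q.dropUntil u hu).support) : z = u := by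
  have hnodup := hq.support_nodup
  rw [support_takeUntil_dropUntil_eq q hu] at hnodup
  have hdisj := List.disjoint_of_nodup_append hnodup
  rw [Walk.support_eq_cons (q.dropUntil u hu)] at h₂
  rcases List.mem_cons.mp h₂ with h | h
  · exact h
  · exact absurd h (hdisj h₁)

lemma end_eq_of_mem_takeUntil {x y u : V} {q : G.Walk x y} (hq : q.IsPath)
    (hu : u ∈ q.support) (h : y ∈ (q.takeUntil u hu).support) : y = u :=
  mem_take_drop_eq hq hu h (Walk.end_mem_support _)

lemma length_take_add_drop {x y u : V} (q : G.Walk x y) (hu : u ∈ q.support) :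
    (q.takeUntil u hu).length + (q.dropUntil u hu).length = q.length := by
  have h := congrArg Walk.length (q.take_spec hu)
  rwa [Walk.length_append] at h

lemma edges_split {x y u : V} (q : G.Walk x y) (hu : u ∈ q.support) :
    q.edges = (q.takeUntil u hu).edges ++ (q.dropUntil u hu).edges := by
  conv_lhs => rw [← q.take_spec hu]
  rw [Walk.edges_append]

lemma edges_takeUntil_complete {x y u z₁ z₂ : V} {q : G.Walk x y} (hq : q.IsPath)
    (hu : u ∈ q.support) (he : s(z₁, z₂) ∈ q.edges)
    (h₁ : z₁ ∈ (q.takeUntil u hu).support) (h₂ : z₂ ∈ (q.takeUntil u hu).support) :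
    s(z₁, z₂) ∈ (q.takeUntil u hu).edges := by
  have he0 := he
  rw [edges_split q hu] at he
  rcases List.mem_append.mp he with h | h
  · exact h
  · exfalso
    have e₁ : z₁ = u := mem_take_drop_eq hq hu h₁ ((q.dropUntil u hu).fst_mem_support_of_mem_edges h)
    have e₂ : z₂ = u := mem_take_drop_eq hq hu h₂ ((q.dropUntil u hu).snd_mem_support_of_mem_edges h)
    have hadj : G.Adj z₁ z₂ := Walk.adj_of_mem_edges _ he0
    rw [e₁, e₂] at hadj
    exact G.irrefl hadj

lemma mem_dropUntil_or {z₁ z₂ : V} : ∀ {x y : V} (q : G.Walk x y), q.IsPath →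
    ∀ (h₁ : z₁ ∈ q.support) (h₂ : z₂ ∈ q.support),
    z₂ ∈ (q.dropUntil z₁ h₁).support ∨ z₁ ∈ (q.dropUntil z₂ h₂).support := by
  intro x y q
  induction q with
  | nil =>
    intro _ h₁ h₂
    left
    have e1 := Walk.mem_support_nil_iff.mp h₁
    have e2 := Walk.mem_support_nil_iff.mp h₂
    subst e1; subst e2
    exact Walk.start_mem_support _
  | @cons a b' c' r p ih =>
    intro hq h₁ h₂
    by_cases h1u : z₁ = a
    · left; subst h1u; rw [dropUntil_start]; exact h₂
    · by_cases h2u : z₂ = a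
      · right; subst h2u; rw [dropUntil_start]; exact h₁
      · have h₁' : z₁ ∈ p.support := by
          rcases List.mem_cons.mp (by rw [← Walk.support_cons r p]; exact h₁) with h | h
          · exact absurd h h1u
          · exact h
        have h₂' : z₂ ∈ p.support := by
          rcases List.mem_cons.mp (by rw [← Walk.support_cons r p]; exact h₂) with h | h
          · exact absurd h h2u
          · exact h
        rcases ih hq.of_cons h₁' h₂' with h | h
        · left; rw [dropUntil_cons r p _ (fun he => h1u he.symm)]; exact h
        · right; rw [dropUntil_cons r p _ (fun he => h2u he.symm)]; exact h

lemma first_mark {P : V → Prop} : ∀ {x y : V} (q : G.Walk x y), q.IsPath →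
    ∀ m ∈ q.support, P m → ∃ (s : V) (hs : s ∈ q.support), P s ∧
      ∀ z ∈ (q.takeUntil s hs).support, z ≠ s → ¬ P z := by
  intro x y q
  induction q with
  | nil =>
    intro _ m hm hPm
    have hmx := Walk.mem_support_nil_iff.mp hm
    refine ⟨m, hm, hPm, ?_⟩
    intro z hz hzs
    subst hmx
    rw [takeUntil_start] at hz
    exact absurd (Walk.mem_support_nil_iff.mp hz) hzs
  | @cons a b' c' r p ih =>
    intro hq m hm hPm
    by_cases hPa : P a
    · refine ⟨a, Walk.start_mem_support _, hPa, ?_⟩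
      intro z hz hzs
      rw [takeUntil_start] at hz
      exact absurd (Walk.mem_support_nil_iff.mp hz) hzs
    · have hm' : m ∈ p.support := by
        rcases List.mem_cons.mp (by rw [← Walk.support_cons r p]; exact hm) with h | h
        · exact absurd (h ▸ hPm) hPa
        · exact h
      obtain ⟨s, hs, hPs, hscan⟩ := ih hq.of_cons m hm' hPm
      have has : a ≠ s := fun h => ((Walk.cons_isPath_iff r p).mp hq).2 (h ▸ hs)
      refine ⟨s, by rw [Walk.support_cons]; exact List.mem_cons_of_mem _ hs, hPs, ?_⟩
      intro z hz hzs
      rw [takeUntil_cons r p _ has, Walk.support_cons] at hz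
      rcases List.mem_cons.mp hz with rfl | hz'
      · exact hPa
      · exact hscan z hz' hzs

lemma last_mark {P : V → Prop} : ∀ {x y : V} (q : G.Walk x y), q.IsPath →
    (∃ m ∈ q.support, P m) → ∃ (t : V) (ht : t ∈ q.support), P t ∧
      ∀ z ∈ (q.dropUntil t ht).support, z ≠ t → ¬ P z := by
  intro x y q
  induction q with
  | nil =>
    rintro _ ⟨m, hm, hPm⟩
    have hmx := Walk.mem_support_nil_iff.mp hm
    refine ⟨m, hm, hPm, ?_⟩
    intro z hz hzs
    subst hmx
    rw [dropUntil_start] at hz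
    exact absurd (Walk.mem_support_nil_iff.mp hz) hzs
  | @cons a b' c' r p ih =>
    rintro hq ⟨m, hm, hPm⟩
    by_cases hex : ∃ m' ∈ p.support, P m'
    · obtain ⟨t, ht, hPt, hscan⟩ := ih hq.of_cons hex
      have hat : a ≠ t := fun h => ((Walk.cons_isPath_iff r p).mp hq).2 (h ▸ ht)
      refine ⟨t, by rw [Walk.support_cons]; exact List.mem_cons_of_mem _ ht, hPt, ?_⟩
      intro z hz hzt
      rw [dropUntil_cons r p _ hat] at hz
      exact hscan z hz hzt
    · have hma : m = a := by
        rcases List.mem_cons.mp (by rw [← Walk.support_cons r p]; exact hm) with h | h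
        · exact h
        · exact absurd ⟨m, h, hPm⟩ hex
      refine ⟨a, Walk.start_mem_support _, hma ▸ hPm, ?_⟩
      intro z hz hza
      rw [dropUntil_start, Walk.support_cons] at hz
      rcases List.mem_cons.mp hz with rfl | hz'
      · exact absurd rfl hza
      · exact fun hPz => hex ⟨z, hz', hPz⟩

lemma master {v x y : V} {c : G.Walk v v} (hhed : HoleEdgeDisjoint G) (hc : IsHole G c)
    (R : G.Walk x y) (hR : R.IsPath) (hlen : 3 ≤ R.length)
    (hclose : s(x, y) ∈ c.edges)
    (hind : ∀ z₁ ∈ R.support, ∀ z₂ ∈ R.support, G.Adj z₁ z₂ →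
      s(z₁, z₂) ∈ R.edges ∨ s(z₁, z₂) = s(x, y))
    (e₀ : Sym2 V) (he₀ : ¬ ((e₀ ∈ R.edges ∨ e₀ = s(x, y)) ↔ e₀ ∈ c.edges)) : False := by
  have hadjxy : G.Adj x y := Walk.adj_of_mem_edges _ hclose
  set D : G.Walk x x := R.append (Walk.cons hadjxy.symm Walk.nil) with hD
  have hDedges : D.edges = R.edges ++ [s(y, x)] := by
    rw [hD, Walk.edges_append, Walk.edges_cons, Walk.edges_nil]
  have hDsupport : D.support = R.support ++ [x] := by
    rw [hD, Walk.support_append, Walk.support_cons, Walk.support_nil]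
    rfl
  have hDlen : D.length = R.length + 1 := by
    rw [hD, Walk.length_append, Walk.length_cons, Walk.length_nil]
  obtain ⟨m, rm, R₁, hR1⟩ := Walk.not_nil_iff.mp
    (by rw [Walk.nil_iff_length_eq]; omega : ¬ R.Nil)
  have hR1path : R₁.IsPath := by rw [hR1] at hR; exact hR.of_cons
  have hR1len : 2 ≤ R₁.length := by
    have : R.length = R₁.length + 1 := by rw [hR1, Walk.length_cons]
    omega
  have hmy : m ≠ y := by
    intro h
    subst h
    rw [Walk.isPath_iff_eq_nil.mp hR1path] at hR1len
    simp at hR1len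
  have hyx_notin : s(y, x) ∉ R.edges := by
    intro hmem
    have hfirst : s(x, m) ∈ R.edges := by rw [hR1]; simp
    have heq := edge_at_start_unique hR hmem hfirst (Sym2.mem_mk_right y x)
      (Sym2.mem_mk_left x m)
    rcases Sym2.eq_iff.mp heq with ⟨h1, _⟩ | ⟨h1, _⟩
    · exact hadjxy.ne h1.symm
    · exact hmy h1.symm
  have hRsupnodup := hR.support_nodup
  rw [Walk.support_eq_cons R] at hRsupnodup
  have hxnotintail : x ∉ R.support.tail := (List.nodup_cons.mp hRsupnodup).1
  have htailnodup : R.support.tail.Nodup := (List.nodup_cons.mp hRsupnodup).2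
  have hDcyc : D.IsCycle := by
    refine ⟨⟨⟨?_⟩, ?_⟩, ?_⟩
    · rw [hDedges]
      rw [List.nodup_append]
      refine ⟨hR.isTrail.edges_nodup, List.nodup_singleton _, ?_⟩
      intro e he e' he' hee'
      rw [List.mem_singleton] at he'
      rw [hee', he'] at he
      exact hyx_notin he
    · intro h
      have := congrArg Walk.length h
      rw [hDlen, Walk.length_nil] at this
      omega
    · have : D.support.tail = R.support.tail ++ [x] := by
        rw [hDsupport, Walk.support_eq_cons R]
        simp
      rw [this, List.nodup_append]
      refine ⟨htailnodup, List.nodup_singleton _, ?_⟩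
      intro z hz z' hz' hzz'
      rw [List.mem_singleton] at hz'
      rw [hzz', hz'] at hz
      exact hxnotintail hz
  have hmemD : ∀ z ∈ D.support, z ∈ R.support := by
    intro z hz
    rw [hDsupport] at hz
    rcases List.mem_append.mp hz with h | h
    · exact h
    · rw [List.mem_singleton] at h
      exact h ▸ Walk.start_mem_support R
  have hDhole : IsHole G D := by
    refine ⟨hDcyc, by omega, ?_⟩
    intro z₁ hz₁ z₂ hz₂ hadj
    rcases hind z₁ (hmemD _ hz₁) z₂ (hmemD _ hz₂) hadj with h | h
    · rw [hDedges]; exact List.mem_append_left _ h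
    · rw [hDedges, h, Sym2.eq_swap]
      exact List.mem_append_right _ (List.mem_singleton_self _)
  rcases hhed x v D c hDhole hc with heq | hdisj
  · have hiff := Set.ext_iff.mp heq e₀
    simp only [Set.mem_setOf_eq] at hiff
    rw [hDedges] at hiff
    apply he₀
    rw [← hiff, List.mem_append, List.mem_singleton, Sym2.eq_swap]
  · refine hdisj (s(y, x)) ?_ ?_
    · rw [hDedges]; exact List.mem_append_right _ (List.mem_singleton_self _)
    · rw [Sym2.eq_swap]; exact hclose

lemma master2 {v w x y : V} {c : G.Walk v v} (hhed : HoleEdgeDisjoint G) (hc : IsHole G c)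
    (hw : w ∉ c.support) (R : G.Walk x y) (hR : R.IsPath) (hlen : 2 ≤ R.length)
    (hRE : ∀ e ∈ R.edges, e ∈ c.edges) (hsup : ∀ z ∈ R.support, z ∈ c.support)
    (hwx : G.Adj w x) (hwy : G.Adj w y)
    (hind : ∀ z₁ ∈ R.support, ∀ z₂ ∈ R.support, G.Adj z₁ z₂ → s(z₁, z₂) ∈ R.edges)
    (hwad : ∀ z ∈ R.support, G.Adj w z → z = x ∨ z = y) : False := by
  obtain ⟨m, rm, R₂, hR2⟩ := Walk.not_nil_iff.mp
    (by rw [Walk.nil_iff_length_eq]; omega : ¬ R.Nil)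
  have hR2path : R₂.IsPath := by rw [hR2] at hR; exact hR.of_cons
  have hxR2 : x ∉ R₂.support := by rw [hR2] at hR; exact ((Walk.cons_isPath_iff _ _).mp hR).2
  have hR2sub : ∀ z ∈ R₂.support, z ∈ R.support := by
    intro z hz; rw [hR2, Walk.support_cons]; exact List.mem_cons_of_mem _ hz
  have hwR2 : w ∉ R₂.support := fun hmem => hw (hsup w (hR2sub w hmem))
  have hwx' : w ≠ x := fun h => hw (h ▸ hsup x (Walk.start_mem_support R))
  set R' : G.Walk m x := R₂.append (Walk.cons hwy.symm (Walk.cons hwx Walk.nil)) with hR'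
  have hR'sup : R'.support = R₂.support ++ [w, x] := by
    rw [hR', Walk.support_append, Walk.support_cons, Walk.support_cons, Walk.support_nil]
    rfl
  have hR'edges : R'.edges = R₂.edges ++ [s(y, w), s(w, x)] := by
    rw [hR', Walk.edges_append, Walk.edges_cons, Walk.edges_cons, Walk.edges_nil]
  have hfirstR : s(x, m) ∈ R.edges := by rw [hR2]; simp
  have hR'path : R'.IsPath := by
    apply Walk.IsPath.mk'
    rw [hR'sup]
    rw [List.nodup_append]
    refine ⟨hR2path.support_nodup, by simp [hwx'], ?_⟩
    intro z hz z' hz' hzz'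
    rcases List.mem_cons.mp hz' with rfl | hz''
    · rw [hzz'] at hz; exact hwR2 hz
    · rw [List.mem_singleton] at hz''
      rw [hzz', hz''] at hz
      exact hxR2 hz
  have hR'len : 3 ≤ R'.length := by
    have h1 : R.length = R₂.length + 1 := by rw [hR2, Walk.length_cons]
    rw [hR', Walk.length_append, Walk.length_cons, Walk.length_cons, Walk.length_nil]
    omega
  have hclose : s(m, x) ∈ c.edges := by
    rw [Sym2.eq_swap]; exact hRE _ hfirstR
  have hind' : ∀ z₁ ∈ R'.support, ∀ z₂ ∈ R'.support, G.Adj z₁ z₂ →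
      s(z₁, z₂) ∈ R'.edges ∨ s(z₁, z₂) = s(m, x) := by
    have hcase : ∀ z ∈ R'.support, z ∈ R₂.support ∨ z = w ∨ z = x := by
      intro z hz
      rw [hR'sup] at hz
      rcases List.mem_append.mp hz with h | h
      · exact Or.inl h
      · rcases List.mem_cons.mp h with rfl | h'
        · exact Or.inr (Or.inl rfl)
        · rw [List.mem_singleton] at h'; exact Or.inr (Or.inr h')
    have hedge2 : ∀ z₁ z₂ : V, z₁ ∈ R₂.support → z₂ ∈ R₂.support → G.Adj z₁ z₂ →
        s(z₁, z₂) ∈ R₂.edges := by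
      intro z₁ z₂ h₁ h₂ hadj
      have hmem := hind z₁ (hR2sub _ h₁) z₂ (hR2sub _ h₂) hadj
      rw [hR2, Walk.edges_cons] at hmem
      rcases List.mem_cons.mp hmem with heq | h
      · exfalso
        have : x ∈ s(z₁, z₂) := heq ▸ Sym2.mem_mk_left x m
        rcases Sym2.mem_iff.mp this with rfl | rfl
        · exact hxR2 h₁
        · exact hxR2 h₂
      · exact h
    have hR2edgesub : ∀ e ∈ R₂.edges, e ∈ R'.edges := by
      intro e he; rw [hR'edges]; exact List.mem_append_left _ he
    intro z₁ hz₁ z₂ hz₂ hadj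
    rcases hcase z₁ hz₁ with h₁ | h₁ | h₁
    · rcases hcase z₂ hz₂ with h₂ | h₂ | h₂
      · exact Or.inl (hR2edgesub _ (hedge2 z₁ z₂ h₁ h₂ hadj))
      · rw [h₂]; rw [h₂] at hadj
        rcases hwad z₁ (hR2sub _ h₁) hadj.symm with h | h
        · exact absurd (h ▸ h₁) hxR2
        · rw [h]; left; rw [hR'edges]
          exact List.mem_append_right _ (by simp)
      · rw [h₂]; rw [h₂] at hadj
        have hmem := hind z₁ (hR2sub _ h₁) x (Walk.start_mem_support R) hadj
        have heq : s(z₁, x) = s(x, m) :=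
          edge_at_start_unique hR hmem hfirstR (Sym2.mem_mk_right _ _) (Sym2.mem_mk_left _ _)
        have hz1m : z₁ = m := by
          rcases Sym2.eq_iff.mp heq with ⟨hh1, hh2⟩ | ⟨hh1, hh2⟩
          · exact absurd hh1 (fun hh => hxR2 (hh ▸ h₁))
          · exact hh1
        right; rw [hz1m]
    · rw [h₁]; rw [h₁] at hadj
      rcases hcase z₂ hz₂ with h₂ | h₂ | h₂
      · rcases hwad z₂ (hR2sub _ h₂) hadj with h | h
        · exact absurd (h ▸ h₂) hxR2
        · rw [h]; left; rw [hR'edges]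
          refine List.mem_append_right _ ?_
          rw [Sym2.eq_swap]; simp
      · rw [h₂] at hadj; exact absurd rfl hadj.ne
      · rw [h₂]; left; rw [hR'edges]
        exact List.mem_append_right _ (by simp)
    · rw [h₁]; rw [h₁] at hadj
      rcases hcase z₂ hz₂ with h₂ | h₂ | h₂
      · have hmem := hind x (Walk.start_mem_support R) z₂ (hR2sub _ h₂) hadj
        have heq : s(x, z₂) = s(x, m) :=
          edge_at_start_unique hR hmem hfirstR (Sym2.mem_mk_left _ _) (Sym2.mem_mk_left _ _)
        have hz2m : z₂ = m := by
          rcases Sym2.eq_iff.mp heq with ⟨hh1, hh2⟩ | ⟨hh1, hh2⟩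
          · exact hh2
          · exact absurd hh2.symm (fun hh => hxR2 (hh ▸ h₂))
        right; rw [hz2m, Sym2.eq_swap]
      · rw [h₂]; left; rw [hR'edges]
        refine List.mem_append_right _ ?_
        rw [Sym2.eq_swap]; simp
      · rw [h₂] at hadj; exact absurd rfl hadj.ne
  apply master hhed hc R' hR'path hR'len hclose hind' (s(y, w))
  intro hiff
  have hyw : s(y, w) ∉ c.edges := by
    intro hmem
    exact hw (Walk.snd_mem_support_of_mem_edges c hmem)
  apply hyw
  apply hiff.mp
  left; rw [hR'edges]
  refine List.mem_append_right _ ?_; simp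

lemma mem_takeUntil_end {x y z : V} {q : G.Walk x y} (hq : q.IsPath) (h : y ∈ q.support)
    (hz : z ∈ q.support) : z ∈ (q.takeUntil y h).support := by
  have hdrop : q.dropUntil y h = Walk.nil := Walk.isPath_iff_eq_nil.mp (hq.dropUntil h)
  have hsplit := support_takeUntil_dropUntil_eq q h
  rw [hdrop] at hsplit
  simp only [Walk.support_nil, List.tail_cons, List.append_nil] at hsplit
  rwa [hsplit] at hz

lemma lemB {v w x y : V} {c : G.Walk v v} (hhed : HoleEdgeDisjoint G) (hc : IsHole G c)
    (hw : w ∉ c.support) (hwX : w ∉ holeNbrs G c)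
    (hx : x ∈ c.support) (hy : y ∈ c.support)
    (hwx : G.Adj w x) (hwy : G.Adj w y) (hxy : x ≠ y) (hnadj : ¬ G.Adj x y) : False := by
  have hwX' : ¬ ∀ z ∈ c.support, G.Adj w z := hwX
  push_neg at hwX'
  obtain ⟨u, hu, hwu⟩ := hwX'
  have hcyc' := hc.1.rotate hu
  have hmemE : ∀ e : Sym2 V, e ∈ (c.rotate u hu).edges ↔ e ∈ c.edges :=
    fun e => (c.rotate_edges u hu).mem_iff
  have hlenrot : (c.rotate u hu).length = c.length := by
    have h1 := congrArg Walk.length (c.take_spec hu)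
    rw [Walk.length_append] at h1
    show ((c.dropUntil u hu).append (c.takeUntil u hu)).length = c.length
    rw [Walk.length_append]; omega
  have htailmem : ∀ z : V, z ∈ (c.rotate u hu).support.tail ↔ z ∈ c.support.tail :=
    fun z => (Walk.support_rotate c u hu).mem_iff
  obtain ⟨u₁, r, p, hEq⟩ := Walk.not_nil_iff.mp
    (by rw [Walk.nil_iff_length_eq, hlenrot]; have := hc.2.1; omega : ¬ (c.rotate u hu).Nil)
  have hpsup_tail : p.support = (c.rotate u hu).support.tail := by
    rw [hEq, Walk.support_cons, List.tail_cons]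
  have hpc : ∀ z ∈ p.support, z ∈ c.support := by
    intro z hz
    rw [hpsup_tail] at hz
    rw [htailmem] at hz
    rw [Walk.support_eq_cons c]
    exact List.mem_cons_of_mem _ hz
  have hppath : p.IsPath := Walk.IsPath.mk' (by
    have h2 := hcyc'.support_nodup; rw [hEq] at h2; simpa using h2)
  have hpedges : ∀ e ∈ p.edges, e ∈ c.edges := by
    intro e he
    rw [← hmemE, hEq, Walk.edges_cons]
    exact List.mem_cons_of_mem _ he
  have hrE : s(u, u₁) ∈ c.edges := by
    rw [← hmemE, hEq, Walk.edges_cons]; exact List.mem_cons_self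
  have hmem_rot : ∀ z, z ∈ c.support → z ∈ (c.rotate u hu).support := by
    intro z hz
    obtain ⟨z₁, _, _, hE₁, _, _⟩ := hole_edges_at hc hz
    rw [← hmemE] at hE₁
    exact Walk.fst_mem_support_of_mem_edges _ hE₁
  have hxu : x ≠ u := fun h => hwu (h ▸ hwx)
  have hyu : y ≠ u := fun h => hwu (h ▸ hwy)
  have hxp : x ∈ p.support := by
    have h2 := hmem_rot x hx
    rw [hEq, Walk.support_cons, List.mem_cons] at h2
    rcases h2 with h2 | h2
    · exact absurd h2 hxu
    · exact h2
  have hyp : y ∈ p.support := by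
    have h2 := hmem_rot y hy
    rw [hEq, Walk.support_cons, List.mem_cons] at h2
    rcases h2 with h2 | h2
    · exact absurd h2 hyu
    · exact h2
  obtain ⟨t, ht, hwt, hTscan⟩ := last_mark p hppath ⟨x, hxp, hwx⟩
  have hp₁path : (p.takeUntil t ht).IsPath := hppath.takeUntil ht
  have hp₁sub : ∀ z ∈ (p.takeUntil t ht).support, z ∈ p.support :=
    fun z hz => Walk.support_takeUntil_subset p ht hz
  have hp₁edges : ∀ e ∈ (p.takeUntil t ht).edges, e ∈ c.edges :=
    fun e he => hpedges e (Walk.edges_takeUntil_subset p ht he)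
  have hmarksub : ∀ z ∈ p.support, G.Adj w z → z ∈ (p.takeUntil t ht).support := by
    intro z hz hwz
    have hsplit := support_takeUntil_dropUntil_eq p ht
    rw [hsplit, List.mem_append] at hz
    rcases hz with h | h
    · exact h
    · have hzd : z ∈ (p.dropUntil t ht).support := by
        rw [Walk.support_eq_cons (p.dropUntil t ht)]; exact List.mem_cons_of_mem _ h
      by_cases hzt : z = t
      · rw [hzt]; exact Walk.end_mem_support _
      · exact absurd hwz (hTscan z hzd hzt)
  have hxp₁ : x ∈ (p.takeUntil t ht).support := hmarksub x hxp hwx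
  have hyp₁ : y ∈ (p.takeUntil t ht).support := hmarksub y hyp hwy
  obtain ⟨sv, hs, hws, hSscan⟩ := first_mark (p.takeUntil t ht) hp₁path x hxp₁ hwx
  have hst : sv ≠ t := by
    intro h
    subst h
    have hxeq : x = sv := by
      by_contra hne
      exact hSscan x (mem_takeUntil_end hp₁path hs hxp₁) hne hwx
    have hyeq : y = sv := by
      by_contra hne
      exact hSscan y (mem_takeUntil_end hp₁path hs hyp₁) hne hwy
    exact hxy (hxeq.trans hyeq.symm)
  have hu_t : u ≠ t := fun h => hwu (h ▸ hwt)
  have hu_sv : u ≠ sv := fun h => hwu (h ▸ hws)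
  have hu_p₁ : u ∉ (p.takeUntil t ht).support := by
    intro hmem
    exact hu_t (end_eq_of_mem_takeUntil hppath ht hmem)
  by_cases hAdjst : G.Adj sv t
  · -- the marked vertices live on a short arc whose endpoints are adjacent
    have hsegpath : ((p.takeUntil t ht).dropUntil sv hs).IsPath := hp₁path.dropUntil hs
    have hsegedges : ∀ e ∈ ((p.takeUntil t ht).dropUntil sv hs).edges, e ∈ c.edges :=
      fun e he => hp₁edges e (Walk.edges_dropUntil_subset _ hs he)
    have hsegsub : ∀ z ∈ ((p.takeUntil t ht).dropUntil sv hs).support,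
        z ∈ (p.takeUntil t ht).support := fun z hz => Walk.support_dropUntil_subset _ hs hz
    have hsegc : ∀ z ∈ ((p.takeUntil t ht).dropUntil sv hs).support, z ∈ c.support :=
      fun z hz => hpc z (hp₁sub z (hsegsub z hz))
    have hmarkseg : ∀ z ∈ (p.takeUntil t ht).support, G.Adj w z →
        z ∈ ((p.takeUntil t ht).dropUntil sv hs).support := by
      intro z hz hwz
      have hsplit := support_takeUntil_dropUntil_eq (p.takeUntil t ht) hs
      rw [hsplit, List.mem_append] at hz
      rcases hz with h | h
      · by_cases hzs : z = sv
        · rw [hzs]; exact Walk.start_mem_support _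
        · exact absurd hwz (hSscan z h hzs)
      · rw [Walk.support_eq_cons ((p.takeUntil t ht).dropUntil sv hs)]
        exact List.mem_cons_of_mem _ h
    have hxseg := hmarkseg x hxp₁ hwx
    have hyseg := hmarkseg y hyp₁ hwy
    have huseg : u ∉ ((p.takeUntil t ht).dropUntil sv hs).support :=
      fun hmem => hu_p₁ (hsegsub u hmem)
    have hlen3 : 3 ≤ ((p.takeUntil t ht).dropUntil sv hs).length := by
      by_contra hlt
      push_neg at hlt
      apply hnadj
      have hpair : ∀ z₁ ∈ ((p.takeUntil t ht).dropUntil sv hs).support,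
          ∀ z₂ ∈ ((p.takeUntil t ht).dropUntil sv hs).support, z₁ ≠ z₂ → G.Adj z₁ z₂ := by
        obtain ⟨m1, r1, seg1, hEq1⟩ := Walk.not_nil_iff.mp
          (by
            rw [Walk.nil_iff_length_eq]
            intro h0
            exact hst (Walk.eq_of_length_eq_zero h0) :
            ¬ ((p.takeUntil t ht).dropUntil sv hs).Nil)
        have hL : seg1.length ≤ 1 := by
          have : ((p.takeUntil t ht).dropUntil sv hs).length = seg1.length + 1 := by
            rw [hEq1, Walk.length_cons]
          omega
        intro z₁ hz₁ z₂ hz₂ hzz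
        rw [hEq1, Walk.support_cons, List.mem_cons] at hz₁ hz₂
        cases seg1 with
        | nil =>
          simp only [Walk.support_nil, List.mem_singleton] at hz₁ hz₂
          rcases hz₁ with h1 | h1 <;> rcases hz₂ with h2 | h2 <;>
            rw [h1, h2] at hzz ⊢
          · exact absurd rfl hzz
          · exact hAdjst
          · exact hAdjst.symm
          · exact absurd rfl hzz
        | cons r2 seg2 =>
          rename_i b2
          have hseg2len : seg2.length = 0 := by
            rw [Walk.length_cons] at hL; omega
          have hb2t : b2 = t := Walk.eq_of_length_eq_zero hseg2len
          have hsup0 : seg2.support = [b2] := by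
            cases seg2 with
            | nil => rfl
            | cons rr qq => rw [Walk.length_cons] at hseg2len; omega
          have hmem : ∀ z : V, (z = sv ∨ z ∈ (Walk.cons r2 seg2).support) →
              z = sv ∨ z = m1 ∨ z = b2 := by
            intro z hzm
            rcases hzm with h | h
            · exact Or.inl h
            · rw [Walk.support_cons, List.mem_cons] at h
              rcases h with h | h
              · exact Or.inr (Or.inl h)
              · rw [hsup0, List.mem_singleton] at h
                exact Or.inr (Or.inr h)
          have hsvb2 : G.Adj sv b2 := by rw [hb2t]; exact hAdjst
          rcases hmem z₁ hz₁ with h1 | h1 | h1 <;> rcases hmem z₂ hz₂ with h2 | h2 | h2 <;>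
            rw [h1, h2] at hzz ⊢
          · exact absurd rfl hzz
          · exact r1
          · exact hsvb2
          · exact r1.symm
          · exact absurd rfl hzz
          · exact r2
          · exact hsvb2.symm
          · exact r2.symm
          · exact absurd rfl hzz
      exact hpair x hxseg y hyseg hxy
    have hsvc : sv ∈ c.support := hpc sv (hp₁sub sv hs)
    have htc : t ∈ c.support := hpc t ht
    have hclose : s(sv, t) ∈ c.edges := hc.2.2 sv hsvc t htc hAdjst
    obtain ⟨uu₁, _, _, hEu, _, _⟩ := hole_edges_at hc hu
    apply master hhed hc ((p.takeUntil t ht).dropUntil sv hs) hsegpath hlen3 hclose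
      (fun z₁ hz₁ z₂ hz₂ hadj =>
        subarc_edge hc hsegpath hsegedges hz₁ hz₂ (hsegc _ hz₁) (hsegc _ hz₂) hadj)
      (s(u, uu₁))
    intro hiff
    rcases hiff.mpr hEu with h | h
    · exact huseg (Walk.fst_mem_support_of_mem_edges _ h)
    · have hu_mem : u ∈ s(sv, t) := h ▸ Sym2.mem_mk_left u uu₁
      rcases Sym2.mem_iff.mp hu_mem with h' | h'
      · exact hu_sv h'
      · exact hu_t h'
  · -- outer arc through u
    have hdptpath : (p.dropUntil t ht).IsPath := hppath.dropUntil ht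
    have htkspath : ((p.takeUntil t ht).takeUntil sv hs).IsPath := hp₁path.takeUntil hs
    set R : G.Walk t sv :=
      (p.dropUntil t ht).append (Walk.cons r ((p.takeUntil t ht).takeUntil sv hs)) with hRdef
    have hRsup : R.support = (p.dropUntil t ht).support ++
        ((p.takeUntil t ht).takeUntil sv hs).support := by
      rw [hRdef, Walk.support_append, Walk.support_cons, List.tail_cons]
    have hRedges : R.edges = (p.dropUntil t ht).edges ++
        (s(u, u₁) :: ((p.takeUntil t ht).takeUntil sv hs).edges) := by
      rw [hRdef, Walk.edges_append, Walk.edges_cons]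
    have htks_sub : ∀ z ∈ ((p.takeUntil t ht).takeUntil sv hs).support,
        z ∈ (p.takeUntil t ht).support := fun z hz => Walk.support_takeUntil_subset _ hs hz
    have hRpath : R.IsPath := by
      apply Walk.IsPath.mk'
      rw [hRsup]
      rw [List.nodup_append]
      refine ⟨hdptpath.support_nodup, htkspath.support_nodup, ?_⟩
      intro z hz1 z' hz2 hzz'
      rw [← hzz'] at hz2
      have hz1' : z ∈ (p.takeUntil t ht).support := htks_sub z hz2
      have hzt : z = t := mem_take_drop_eq hppath ht hz1' hz1
      rw [hzt] at hz2
      exact hst (end_eq_of_mem_takeUntil hp₁path hs hz2).symm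
    have hREdges : ∀ e ∈ R.edges, e ∈ c.edges := by
      intro e he
      rw [hRedges, List.mem_append] at he
      rcases he with h | h
      · exact hpedges e (Walk.edges_dropUntil_subset p ht h)
      · rcases List.mem_cons.mp h with h' | h'
        · exact h' ▸ hrE
        · exact hp₁edges e (Walk.edges_takeUntil_subset _ hs h')
    have hRsupc : ∀ z ∈ R.support, z ∈ c.support := by
      intro z hz
      rw [hRsup, List.mem_append] at hz
      rcases hz with h | h
      · exact hpc z (Walk.support_dropUntil_subset p ht h)
      · exact hpc z (hp₁sub z (htks_sub z h))
    have hRlen : 2 ≤ R.length := by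
      have h1 : (p.dropUntil t ht).length ≠ 0 := by
        intro h0
        exact hu_t (Walk.eq_of_length_eq_zero h0).symm
      rw [hRdef, Walk.length_append, Walk.length_cons]
      omega
    have hind : ∀ z₁ ∈ R.support, ∀ z₂ ∈ R.support, G.Adj z₁ z₂ → s(z₁, z₂) ∈ R.edges := by
      intro z₁ hz₁ z₂ hz₂ hadj
      rcases subarc_edge hc hRpath hREdges hz₁ hz₂ (hRsupc _ hz₁) (hRsupc _ hz₂) hadj with h | h
      · exact h
      · exfalso
        apply hAdjst
        rcases Sym2.eq_iff.mp h with ⟨h1, h2⟩ | ⟨h1, h2⟩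
        · rw [h1, h2] at hadj; exact hadj.symm
        · rw [h1, h2] at hadj; exact hadj
    have hwad : ∀ z ∈ R.support, G.Adj w z → z = t ∨ z = sv := by
      intro z hz hwz
      rw [hRsup, List.mem_append] at hz
      rcases hz with h | h
      · by_cases hzt : z = t
        · exact Or.inl hzt
        · exact absurd hwz (hTscan z h hzt)
      · by_cases hzs : z = sv
        · exact Or.inr hzs
        · exact absurd hwz (hSscan z h hzs)
    exact master2 hhed hc hw R hRpath hRlen hREdges hRsupc hwt hws hind hwad

lemma append_isPath {a m b : V} {p : G.Walk a m} {q : G.Walk m b}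
    (hp : p.IsPath) (hq : q.IsPath)
    (hdisj : ∀ z, z ∈ p.support → z ∈ q.support → z = m) : (p.append q).IsPath := by
  apply Walk.IsPath.mk'
  rw [Walk.support_append, List.nodup_append]
  refine ⟨hp.support_nodup, ?_, ?_⟩
  · have := hq.support_nodup
    rw [Walk.support_eq_cons q] at this
    exact (List.nodup_cons.mp this).2
  · intro z hz1 z' hz2 hzz'
    rw [← hzz'] at hz2
    have hz2' : z ∈ q.support := by
      rw [Walk.support_eq_cons q]; exact List.mem_cons_of_mem _ hz2
    have hzm : z = m := hdisj z hz1 hz2'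
    have := hq.support_nodup
    rw [Walk.support_eq_cons q] at this
    exact (List.nodup_cons.mp this).1 (hzm ▸ hz2)

lemma mem_reverse_support {a b z : V} (q : G.Walk a b) :
    z ∈ q.reverse.support ↔ z ∈ q.support := by
  rw [Walk.support_reverse, List.mem_reverse]

lemma mem_reverse_edges {a b : V} (q : G.Walk a b) {e : Sym2 V} :
    e ∈ q.reverse.edges ↔ e ∈ q.edges := by
  rw [Walk.edges_reverse, List.mem_reverse]

lemma mem_support_rotate {v u z : V} {c : G.Walk v v} (hc : IsHole G c)
    (hu : u ∈ c.support) (hz : z ∈ c.support) : z ∈ (c.rotate u hu).support := by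
  obtain ⟨z₁, _, _, hE₁, _, _⟩ := hole_edges_at hc hz
  rw [← (c.rotate_edges u hu).mem_iff] at hE₁
  exact Walk.fst_mem_support_of_mem_edges _ hE₁

lemma mem_avoid_of_support {v z : V} {c : G.Walk v v} (hz : z ∈ c.support) :
    z ∈ avoidSet G c := Set.mem_union_left _ hz

lemma F1core {v a b x z : V} {c : G.Walk v v}
    (ha : a ∈ c.support) (hx : x ∈ c.support)
    (W : G.Walk a b) (hWpath : W.IsPath)
    (hint : ∀ z' ∈ W.support, z' ≠ a → z' ≠ b → z' ∉ avoidSet G c)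
    (hmin : ∀ (W' : G.Walk a x), IsCAvoidingPath G c W' → W.length ≤ W'.length)
    (hzmem : z ∈ W.support) (hza : z ≠ a) (hzb : z ≠ b)
    (hxa : x ≠ a) (hadjzx : G.Adj z x) : G.Adj z b := by
  have hxT : x ∉ (W.takeUntil z hzmem).support := by
    intro hmem
    have hxW : x ∈ W.support := Walk.support_takeUntil_subset _ _ hmem
    by_cases hxb : x = b
    · have hbT : b ∈ (W.takeUntil z hzmem).support := hxb ▸ hmem
      exact hzb (end_eq_of_mem_takeUntil hWpath hzmem hbT).symm
    · exact hint x hxW hxa hxb (mem_avoid_of_support hx)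
  have hTpath : (W.takeUntil z hzmem).IsPath := hWpath.takeUntil hzmem
  have hT0 : (W.takeUntil z hzmem).length ≠ 0 := by
    intro h0
    exact hza (Walk.eq_of_length_eq_zero h0).symm
  set W₂ : G.Walk a x := (W.takeUntil z hzmem).append (Walk.cons hadjzx Walk.nil) with hW₂
  have hW₂sup : W₂.support = (W.takeUntil z hzmem).support ++ [x] := by
    rw [hW₂, Walk.support_append, Walk.support_cons, Walk.support_nil]
    rfl
  have hW₂len : W₂.length = (W.takeUntil z hzmem).length + 1 := by
    rw [hW₂, Walk.length_append, Walk.length_cons, Walk.length_nil]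
  have hW₂path : W₂.IsPath := by
    apply append_isPath hTpath
    · rw [Walk.cons_isPath_iff]
      exact ⟨Walk.IsPath.nil, by simp [hadjzx.ne]⟩
    · intro z' hz1 hz2
      rw [Walk.support_cons, Walk.support_nil, List.mem_cons, List.mem_singleton] at hz2
      rcases hz2 with h | h
      · exact h
      · exact absurd (h ▸ hz1) hxT
  have havoid2 : IsCAvoidingPath G c W₂ := by
    refine ⟨hW₂path, ?_, ?_⟩
    · intro z' hz' hz'a hz'x
      rw [hW₂sup, List.mem_append, List.mem_singleton] at hz'
      rcases hz' with h | h
      · have hz'W : z' ∈ W.support := Walk.support_takeUntil_subset _ _ h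
        have hz'b : z' ≠ b := by
          intro hb'
          have hbT : b ∈ (W.takeUntil z hzmem).support := hb' ▸ h
          exact hzb (end_eq_of_mem_takeUntil hWpath hzmem hbT).symm
        exact hint z' hz'W hz'a hz'b
      · exact absurd h hz'x
    · intro h1
      rw [hW₂len] at h1
      omega
  have hmin' := hmin W₂ havoid2
  rw [hW₂len] at hmin'
  have hadd := length_take_add_drop W hzmem
  have hD0 : (W.dropUntil z hzmem).length ≠ 0 := by
    intro h0
    exact hzb (Walk.eq_of_length_eq_zero h0)
  have hD1 : (W.dropUntil z hzmem).length = 1 := by omega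
  exact Walk.adj_of_length_eq_one hD1

lemma builderCA {v a b x : V} {c : G.Walk v v} (hhed : HoleEdgeDisjoint G) (hc : IsHole G c)
    (ha : a ∈ c.support) (hx : x ∈ c.support)
    (hnadj : ¬ G.Adj a b)
    (W : G.Walk a b) (hWpath : W.IsPath)
    (hWind : ∀ z₁ ∈ W.support, ∀ z₂ ∈ W.support, G.Adj z₁ z₂ → s(z₁, z₂) ∈ W.edges)
    (hWC : ∀ z ∈ W.support, z ≠ a → z ≠ b → z ∉ c.support)
    (hadjxa : G.Adj x a)
    {z : V} (hz : z ∈ W.support) (hza : z ≠ a) (hzb : z ≠ b) (hadjzx : G.Adj z x)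
    (hsnd : ∀ z' ∈ W.support, G.Adj a z' → ¬ G.Adj z' x) : False := by
  obtain ⟨s, hs, hPs, hscan⟩ := first_mark (P := fun z' => z' ≠ a ∧ z' ≠ b ∧ G.Adj z' x)
    W hWpath z hz ⟨hza, hzb, hadjzx⟩
  obtain ⟨hsa, hsb, hsx⟩ := hPs
  have hxa' : x ≠ a := hadjxa.ne
  have hxb : x ≠ b := fun h => hnadj (h ▸ hadjxa).symm
  have hxW : x ∉ W.support := fun hmem => hWC x hmem hxa' hxb hx
  have hTpath : (W.takeUntil s hs).IsPath := hWpath.takeUntil hs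
  have hT0 : (W.takeUntil s hs).length ≠ 0 := fun h0 => hsa (Walk.eq_of_length_eq_zero h0).symm
  have hT1 : (W.takeUntil s hs).length ≠ 1 := by
    intro h1
    exact hsnd s (Walk.support_takeUntil_subset _ hs (Walk.end_mem_support _))
      (Walk.adj_of_length_eq_one h1) hsx
  set R : G.Walk x a := Walk.cons hsx.symm (W.takeUntil s hs).reverse with hR
  have hRsup : ∀ z', z' ∈ R.support ↔ z' = x ∨ z' ∈ (W.takeUntil s hs).support := by
    intro z'
    rw [hR, Walk.support_cons, List.mem_cons, mem_reverse_support]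
  have hRedges : ∀ e, e ∈ R.edges ↔ e = s(x, s) ∨ e ∈ (W.takeUntil s hs).edges := by
    intro e
    rw [hR, Walk.edges_cons, List.mem_cons, mem_reverse_edges]
  have hRpath : R.IsPath := by
    rw [hR, Walk.cons_isPath_iff]
    refine ⟨hTpath.reverse, ?_⟩
    rw [mem_reverse_support]
    intro hmem
    exact hxW (Walk.support_takeUntil_subset _ hs hmem)
  have hRlen : 3 ≤ R.length := by
    rw [hR, Walk.length_cons, Walk.length_reverse]
    omega
  have hclose : s(x, a) ∈ c.edges := hc.2.2 x hx a ha hadjxa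
  have hone : ∀ z₂ ∈ (W.takeUntil s hs).support, G.Adj x z₂ →
      s(x, z₂) ∈ R.edges ∨ s(x, z₂) = s(x, a) := by
    intro z₂ hz₂ hadj
    by_cases hz₂s : z₂ = s
    · left; rw [hRedges]; left; rw [hz₂s]
    · by_cases hz₂a : z₂ = a
      · right; rw [hz₂a]
      · exfalso
        have hz₂b : z₂ ≠ b := by
          intro hb'
          have hbT : b ∈ (W.takeUntil s hs).support := hb' ▸ hz₂
          exact hz₂s (hb'.trans (end_eq_of_mem_takeUntil hWpath hs hbT))
        exact hscan z₂ hz₂ hz₂s ⟨hz₂a, hz₂b, hadj.symm⟩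
  have hind : ∀ z₁ ∈ R.support, ∀ z₂ ∈ R.support, G.Adj z₁ z₂ →
      s(z₁, z₂) ∈ R.edges ∨ s(z₁, z₂) = s(x, a) := by
    intro z₁ hz₁ z₂ hz₂ hadj
    rw [hRsup] at hz₁ hz₂
    rcases hz₁ with h₁ | h₁
    · rcases hz₂ with h₂ | h₂
      · rw [h₁, h₂] at hadj; exact absurd rfl hadj.ne
      · rw [h₁]; rw [h₁] at hadj
        exact hone z₂ h₂ hadj
    · rcases hz₂ with h₂ | h₂
      · rw [h₂]; rw [h₂] at hadj
        rw [Sym2.eq_swap (a := z₁) (b := x)]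
        exact hone z₁ h₁ hadj.symm
      · have hmem := hWind z₁ (Walk.support_takeUntil_subset _ hs h₁) z₂
          (Walk.support_takeUntil_subset _ hs h₂) hadj
        left
        rw [hRedges]
        right
        exact edges_takeUntil_complete hWpath hs hmem h₁ h₂
  apply master hhed hc R hRpath hRlen hclose hind (s(x, s))
  intro hiff
  have hmem : s(x, s) ∈ c.edges := by
    apply hiff.mp
    left; rw [hRedges]; left; rfl
  exact hWC s hs hsa hsb (Walk.snd_mem_support_of_mem_edges c hmem)

lemma builderWARC {v a b : V} {c : G.Walk v v} (hhed : HoleEdgeDisjoint G) (hc : IsHole G c)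
    (ha : a ∈ c.support) (hne : a ≠ b) (hnadj : ¬ G.Adj a b)
    (W : G.Walk a b) (hWpath : W.IsPath) (hWlen : 2 ≤ W.length)
    (hWind : ∀ z₁ ∈ W.support, ∀ z₂ ∈ W.support, G.Adj z₁ z₂ → s(z₁, z₂) ∈ W.edges)
    (hWC : ∀ z ∈ W.support, z ≠ a → z ≠ b → z ∉ c.support)
    (A : G.Walk a b) (hApath : A.IsPath)
    (hAE : ∀ e ∈ A.edges, e ∈ c.edges)
    (hAsup : ∀ z ∈ A.support, z ∈ c.support)
    (hAlen : 2 ≤ A.length)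
    (hclean : ∀ z ∈ A.support, z ≠ a → z ≠ b → ∀ z' ∈ W.support, z' ≠ a → z' ≠ b →
      ¬ G.Adj z' z) :
    False := by
  obtain ⟨s₂, rA, A₂, hA2⟩ := Walk.not_nil_iff.mp
    (by rw [Walk.nil_iff_length_eq]; omega : ¬ A.Nil)
  have hApath' := hApath
  rw [hA2] at hApath'
  have hA2path : A₂.IsPath := hApath'.of_cons
  have haA₂ : a ∉ A₂.support := ((Walk.cons_isPath_iff _ _).mp hApath').2
  have hA2sub : ∀ z ∈ A₂.support, z ∈ A.support := by
    intro z hz; rw [hA2, Walk.support_cons]; exact List.mem_cons_of_mem _ hz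
  have hA2lenEq : A.length = A₂.length + 1 := by rw [hA2, Walk.length_cons]
  have hs₂b : s₂ ≠ b := by
    intro h
    subst h
    rw [Walk.isPath_iff_eq_nil.mp hA2path] at hA2lenEq
    simp at hA2lenEq
    omega
  have hs₂c : s₂ ∈ c.support := hAsup s₂ (hA2sub s₂ (Walk.start_mem_support _))
  set R : G.Walk a s₂ := W.append A₂.reverse with hR
  have hRsup : ∀ z, z ∈ R.support ↔ z ∈ W.support ∨ z ∈ A₂.support := by
    intro z
    rw [hR, Walk.mem_support_append_iff, mem_reverse_support]
  have hRedges : ∀ e, e ∈ R.edges ↔ e ∈ W.edges ∨ e ∈ A₂.edges := by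
    intro e
    rw [hR, Walk.edges_append, List.mem_append, mem_reverse_edges]
  have hRpath : R.IsPath := by
    apply append_isPath hWpath hA2path.reverse
    intro z hz1 hz2
    rw [mem_reverse_support] at hz2
    have hzc : z ∈ c.support := hAsup z (hA2sub z hz2)
    by_cases hza : z = a
    · exact absurd (hza ▸ hz2) haA₂
    · by_cases hzb : z = b
      · exact hzb
      · exact absurd hzc (hWC z hz1 hza hzb)
  have hRlen : 3 ≤ R.length := by
    rw [hR, Walk.length_append, Walk.length_reverse]
    omega
  have hclose : s(a, s₂) ∈ c.edges := hc.2.2 a ha s₂ hs₂c rA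
  have hAedge_cases : ∀ {e : Sym2 V}, e ∈ A.edges → e = s(a, s₂) ∨ e ∈ A₂.edges := by
    intro e he
    rw [hA2, Walk.edges_cons, List.mem_cons] at he
    exact he
  have hcross : ∀ z' ∈ W.support, ∀ z₂ ∈ A₂.support, G.Adj z' z₂ →
      s(z', z₂) ∈ R.edges ∨ s(z', z₂) = s(a, s₂) := by
    intro z' hz' z₂ hz₂ hadj
    by_cases hz'a : z' = a
    · rw [hz'a]; rw [hz'a] at hadj
      rcases subarc_edge hc hApath hAE (Walk.start_mem_support A) (hA2sub z₂ hz₂)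
        ha (hAsup z₂ (hA2sub z₂ hz₂)) hadj with h | h
      · rcases hAedge_cases h with h' | h'
        · right
          rcases Sym2.eq_iff.mp h' with ⟨_, h2⟩ | ⟨h1, _⟩
          · rw [h2]
          · exact absurd h1 rA.ne
        · exact absurd (Walk.fst_mem_support_of_mem_edges A₂ h') haA₂
      · exfalso
        rcases Sym2.eq_iff.mp h with ⟨_, h2⟩ | ⟨_, h2⟩
        · rw [h2] at hadj; exact hnadj hadj
        · exact haA₂ (h2 ▸ hz₂)
    · by_cases hz'b : z' = b
      · rw [hz'b]; rw [hz'b] at hadj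
        rcases subarc_edge hc hApath hAE (Walk.end_mem_support A) (hA2sub z₂ hz₂)
          (hAsup b (Walk.end_mem_support A)) (hAsup z₂ (hA2sub z₂ hz₂)) hadj with h | h
        · rcases hAedge_cases h with h' | h'
          · exfalso
            rcases Sym2.eq_iff.mp h' with ⟨h1, _⟩ | ⟨h1, _⟩
            · exact hne h1.symm
            · exact hs₂b h1.symm
          · left; rw [hRedges]; exact Or.inr h'
        · exfalso
          rcases Sym2.eq_iff.mp h with ⟨h1, _⟩ | ⟨_, h2⟩
          · exact hne h1.symm
          · exact haA₂ (h2 ▸ hz₂)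
      · by_cases hz₂b : z₂ = b
        · left; rw [hRedges]
          exact Or.inl (hWind z' hz' z₂ (by rw [hz₂b]; exact Walk.end_mem_support W) hadj)
        · exfalso
          have hz₂a : z₂ ≠ a := fun h => haA₂ (h ▸ hz₂)
          exact hclean z₂ (hA2sub z₂ hz₂) hz₂a hz₂b z' hz' hz'a hz'b hadj
  have hind : ∀ z₁ ∈ R.support, ∀ z₂ ∈ R.support, G.Adj z₁ z₂ →
      s(z₁, z₂) ∈ R.edges ∨ s(z₁, z₂) = s(a, s₂) := by
    intro z₁ hz₁ z₂ hz₂ hadj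
    rw [hRsup] at hz₁ hz₂
    rcases hz₁ with h₁ | h₁
    · rcases hz₂ with h₂ | h₂
      · left; rw [hRedges]; exact Or.inl (hWind z₁ h₁ z₂ h₂ hadj)
      · exact hcross z₁ h₁ z₂ h₂ hadj
    · rcases hz₂ with h₂ | h₂
      · rw [Sym2.eq_swap (a := z₁) (b := z₂)]
        exact hcross z₂ h₂ z₁ h₁ hadj.symm
      · rcases subarc_edge hc hApath hAE (hA2sub z₁ h₁) (hA2sub z₂ h₂)
          (hAsup z₁ (hA2sub z₁ h₁)) (hAsup z₂ (hA2sub z₂ h₂)) hadj with h | h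
        · rcases hAedge_cases h with h' | h'
          · exfalso
            have hamem : a ∈ s(z₁, z₂) := h' ▸ Sym2.mem_mk_left a s₂
            rcases Sym2.mem_iff.mp hamem with h'' | h''
            · exact haA₂ (h'' ▸ h₁)
            · exact haA₂ (h'' ▸ h₂)
          · left; rw [hRedges]; exact Or.inr h'
        · exfalso
          have hamem : a ∈ s(z₁, z₂) := h ▸ Sym2.mem_mk_left a b
          rcases Sym2.mem_iff.mp hamem with h'' | h''
          · exact haA₂ (h'' ▸ h₁)
          · exact haA₂ (h'' ▸ h₂)
  obtain ⟨w₁, rW, W₁, hW1⟩ := Walk.not_nil_iff.mp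
    (by rw [Walk.nil_iff_length_eq]; omega : ¬ W.Nil)
  have hWpath' := hWpath
  rw [hW1] at hWpath'
  have hw₁a : w₁ ≠ a := by
    intro h
    exact ((Walk.cons_isPath_iff _ _).mp hWpath').2 (h ▸ Walk.start_mem_support W₁)
  have hw₁b : w₁ ≠ b := by
    intro h
    have hW₁path : W₁.IsPath := hWpath'.of_cons
    have hlen1 : W.length = W₁.length + 1 := by rw [hW1, Walk.length_cons]
    subst h
    rw [Walk.isPath_iff_eq_nil.mp hW₁path] at hlen1
    simp at hlen1
    omega
  have hw₁W : w₁ ∈ W.support := by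
    rw [hW1, Walk.support_cons]
    exact List.mem_cons_of_mem _ (Walk.start_mem_support _)
  have he₀ : s(a, w₁) ∈ W.edges := by rw [hW1]; simp
  apply master hhed hc R hRpath hRlen hclose hind (s(a, w₁))
  intro hiff
  have hmem : s(a, w₁) ∈ c.edges := by
    apply hiff.mp
    left; rw [hRedges]; exact Or.inl he₀
  exact hWC w₁ hw₁W hw₁a hw₁b (Walk.snd_mem_support_of_mem_edges c hmem)

lemma builderD1 {v a b c' w₁ : V} {cw : G.Walk v v} (hhed : HoleEdgeDisjoint G)
    (hc : IsHole G cw) (hne : a ≠ b)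
    (h₁ : G.Adj a w₁) (W₁ : G.Walk w₁ b) (hWpath : (Walk.cons h₁ W₁).IsPath)
    (hWlen : 3 ≤ (Walk.cons h₁ W₁).length)
    (hWind : ∀ z₁ ∈ (Walk.cons h₁ W₁).support, ∀ z₂ ∈ (Walk.cons h₁ W₁).support,
      G.Adj z₁ z₂ → s(z₁, z₂) ∈ (Walk.cons h₁ W₁).edges)
    (hWC : ∀ z ∈ (Walk.cons h₁ W₁).support, z ≠ a → z ≠ b → z ∉ cw.support)
    (hc'c : c' ∈ cw.support)
    (hnadjc'b : ¬ G.Adj c' b)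
    (B : G.Walk c' b) (hBpath : B.IsPath) (hBE : ∀ e ∈ B.edges, e ∈ cw.edges)
    (hBsup : ∀ z ∈ B.support, z ∈ cw.support) (hBlen : 2 ≤ B.length)
    (hadjw₁c' : G.Adj w₁ c')
    (hw₁only : ∀ z ∈ B.support, z ≠ c' → ¬ G.Adj w₁ z)
    (hrest : ∀ z' ∈ W₁.support, z' ≠ w₁ → z' ≠ b → ∀ z ∈ B.support, z ≠ b →
      ¬ G.Adj z' z) : False := by
  have hc'b : c' ≠ b := by
    intro h
    subst h
    rw [Walk.isPath_iff_eq_nil.mp hBpath] at hBlen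
    rw [Walk.length_nil] at hBlen
    omega
  obtain ⟨p₂, rB, B₃, hB2⟩ := Walk.not_nil_iff.mp
    (by rw [Walk.nil_iff_length_eq]; omega : ¬ B.Nil)
  have hBpath' := hBpath
  rw [hB2] at hBpath'
  have hB3path : B₃.IsPath := hBpath'.of_cons
  have hc'B₃ : c' ∉ B₃.support := ((Walk.cons_isPath_iff _ _).mp hBpath').2
  have hB3sub : ∀ z ∈ B₃.support, z ∈ B.support := by
    intro z hz; rw [hB2, Walk.support_cons]; exact List.mem_cons_of_mem _ hz
  have hW₁path : W₁.IsPath := hWpath.of_cons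
  have haW₁ : a ∉ W₁.support := ((Walk.cons_isPath_iff _ _).mp hWpath).2
  have hWlen1 : (Walk.cons h₁ W₁).length = W₁.length + 1 := Walk.length_cons _ _
  have hw₁b : w₁ ≠ b := by
    intro h
    subst h
    have hzero : W₁.length = 0 := by
      rw [Walk.isPath_iff_eq_nil.mp hW₁path]
      rfl
    omega
  have hw₁a : w₁ ≠ a := fun h => haW₁ (h ▸ Walk.start_mem_support W₁)
  have hw₁mem : w₁ ∈ (Walk.cons h₁ W₁).support := by
    rw [Walk.support_cons]; exact List.mem_cons_of_mem _ (Walk.start_mem_support _)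
  have hW₁subW : ∀ z ∈ W₁.support, z ∈ (Walk.cons h₁ W₁).support := by
    intro z hz; rw [Walk.support_cons]; exact List.mem_cons_of_mem _ hz
  have hw₁c : w₁ ∉ cw.support := hWC w₁ hw₁mem hw₁a hw₁b
  have hW₁offc : ∀ z ∈ W₁.support, z ≠ b → z ∉ cw.support := by
    intro z hz hzb
    have hza : z ≠ a := fun h => haW₁ (h ▸ hz)
    exact hWC z (hW₁subW z hz) hza hzb
  set inner : G.Walk b c' := W₁.reverse.append (Walk.cons hadjw₁c' Walk.nil) with hinner
  have hinnersup : ∀ z, z ∈ inner.support ↔ z ∈ W₁.support ∨ z = c' := by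
    intro z
    rw [hinner, Walk.mem_support_append_iff, mem_reverse_support, Walk.support_cons,
      Walk.support_nil, List.mem_cons, List.mem_singleton]
    constructor
    · rintro (h | h | h)
      · exact Or.inl h
      · exact Or.inl (h ▸ Walk.start_mem_support W₁)
      · exact Or.inr h
    · rintro (h | h)
      · exact Or.inl h
      · exact Or.inr (Or.inr h)
  have hinneredges : ∀ e : Sym2 V, e ∈ inner.edges ↔ e ∈ W₁.edges ∨ e = s(w₁, c') := by
    intro e
    rw [hinner, Walk.edges_append, List.mem_append, mem_reverse_edges, Walk.edges_cons,
      Walk.edges_nil, List.mem_singleton]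
  have hinnerpath : inner.IsPath := by
    apply append_isPath hW₁path.reverse
    · rw [Walk.cons_isPath_iff]
      refine ⟨Walk.IsPath.nil, ?_⟩
      rw [Walk.support_nil, List.mem_singleton]
      intro h
      exact hw₁c (h ▸ hc'c)
    · intro z hz1 hz2
      rw [mem_reverse_support] at hz1
      rw [Walk.support_cons, Walk.support_nil, List.mem_cons, List.mem_singleton] at hz2
      rcases hz2 with h | h
      · exact h
      · exfalso
        have hzb : z ≠ b := by rw [h]; exact hc'b
        exact hW₁offc z hz1 hzb (h ▸ hc'c)
  set R : G.Walk p₂ c' := B₃.append inner with hR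
  have hRsup : ∀ z, z ∈ R.support ↔ z ∈ B₃.support ∨ z ∈ W₁.support ∨ z = c' := by
    intro z
    rw [hR, Walk.mem_support_append_iff, hinnersup z]
  have hRedges : ∀ e : Sym2 V, e ∈ R.edges ↔ e ∈ B₃.edges ∨ e ∈ W₁.edges ∨ e = s(w₁, c') := by
    intro e
    rw [hR, Walk.edges_append, List.mem_append, hinneredges e]
  have hRpath : R.IsPath := by
    apply append_isPath hB3path hinnerpath
    intro z hz1 hz2
    rw [hinnersup] at hz2
    rcases hz2 with h | h
    · by_cases hzb : z = b
      · exact hzb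
      · exact absurd (hBsup z (hB3sub z hz1)) (hW₁offc z h hzb)
    · exact absurd (h ▸ hz1) hc'B₃
  have hRlen : 3 ≤ R.length := by
    have hh1 : R.length = B₃.length + inner.length := by rw [hR, Walk.length_append]
    have hh2 : inner.length = W₁.length + 1 := by
      rw [hinner, Walk.length_append, Walk.length_reverse, Walk.length_cons, Walk.length_nil]
    omega
  have hfirstB : s(c', p₂) ∈ B.edges := by rw [hB2]; simp
  have hclose : s(p₂, c') ∈ cw.edges := by rw [Sym2.eq_swap]; exact hBE _ hfirstB
  have hBall : ∀ z₁ ∈ B.support, ∀ z₂ ∈ B.support, G.Adj z₁ z₂ → s(z₁, z₂) ∈ B.edges := by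
    intro z₁ hz₁ z₂ hz₂ hadj
    rcases subarc_edge hc hBpath hBE hz₁ hz₂ (hBsup _ hz₁) (hBsup _ hz₂) hadj with h | h
    · exact h
    · exfalso
      apply hnadjc'b
      rcases Sym2.eq_iff.mp h with ⟨e1, e2⟩ | ⟨e1, e2⟩
      · rw [e1, e2] at hadj; exact hadj
      · rw [e1, e2] at hadj; exact hadj.symm
  have hBedge_cases : ∀ {e : Sym2 V}, e ∈ B.edges → e = s(c', p₂) ∨ e ∈ B₃.edges := by
    intro e he; rw [hB2, Walk.edges_cons, List.mem_cons] at he; exact he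
  have hWedge_cases : ∀ {e : Sym2 V}, e ∈ (Walk.cons h₁ W₁).edges →
      e = s(a, w₁) ∨ e ∈ W₁.edges := by
    intro e he; rw [Walk.edges_cons, List.mem_cons] at he; exact he
  have hxBW : ∀ z₁ ∈ B₃.support, ∀ z₂ ∈ W₁.support, G.Adj z₁ z₂ → s(z₁, z₂) ∈ R.edges := by
    intro z₁ hz₁ z₂ hz₂ hadj
    by_cases hz₂b : z₂ = b
    · have hmem := hBall z₁ (hB3sub _ hz₁) b (Walk.end_mem_support B) (hz₂b ▸ hadj)
      rcases hBedge_cases hmem with h | h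
      · exfalso
        have hcmem : c' ∈ s(z₁, b) := h ▸ Sym2.mem_mk_left c' p₂
        rcases Sym2.mem_iff.mp hcmem with h' | h'
        · exact hc'B₃ (h' ▸ hz₁)
        · exact hc'b h'
      · rw [hRedges, hz₂b]; exact Or.inl h
    · by_cases hz₂w : z₂ = w₁
      · exfalso
        have hz₁c' : z₁ ≠ c' := fun h => hc'B₃ (h ▸ hz₁)
        exact hw₁only z₁ (hB3sub _ hz₁) hz₁c' (hz₂w ▸ hadj).symm
      · by_cases hz₁b : z₁ = b
        · have hz₁W : z₁ ∈ (Walk.cons h₁ W₁).support := by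
            rw [hz₁b]; exact Walk.end_mem_support _
          have hmem := hWind z₂ (hW₁subW _ hz₂) z₁ hz₁W hadj.symm
          rcases hWedge_cases hmem with h | h
          · exfalso
            have hamem : a ∈ s(z₂, z₁) := h ▸ Sym2.mem_mk_left a w₁
            rcases Sym2.mem_iff.mp hamem with h' | h'
            · exact haW₁ (h' ▸ hz₂)
            · exact hne (h'.trans hz₁b)
          · rw [hRedges, Sym2.eq_swap]; exact Or.inr (Or.inl h)
        · exfalso
          exact hrest z₂ hz₂ hz₂w hz₂b z₁ (hB3sub _ hz₁) hz₁b hadj.symm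
  have hxCW : ∀ z₂ ∈ W₁.support, G.Adj c' z₂ → s(c', z₂) ∈ R.edges := by
    intro z₂ hz₂ hadj
    by_cases hz₂w : z₂ = w₁
    · rw [hRedges, hz₂w, Sym2.eq_swap]; exact Or.inr (Or.inr rfl)
    · by_cases hz₂b : z₂ = b
      · exact absurd (hz₂b ▸ hadj) hnadjc'b
      · exact absurd hadj.symm
          (hrest z₂ hz₂ hz₂w hz₂b c' (Walk.start_mem_support B) hc'b)
  have hxCB : ∀ z₂ ∈ B₃.support, G.Adj c' z₂ → s(c', z₂) = s(c', p₂) := by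
    intro z₂ hz₂ hadj
    have hmem := hBall c' (Walk.start_mem_support B) z₂ (hB3sub _ hz₂) hadj
    rcases hBedge_cases hmem with h | h
    · exact h
    · exact absurd (Walk.fst_mem_support_of_mem_edges B₃ h) hc'B₃
  have hind : ∀ z₁ ∈ R.support, ∀ z₂ ∈ R.support, G.Adj z₁ z₂ →
      s(z₁, z₂) ∈ R.edges ∨ s(z₁, z₂) = s(p₂, c') := by
    intro z₁ hz₁ z₂ hz₂ hadj
    rw [hRsup] at hz₁ hz₂
    rcases hz₁ with h₁ | h₁ | h₁
    · rcases hz₂ with h₂ | h₂ | h₂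
      · have hmem := hBall z₁ (hB3sub _ h₁) z₂ (hB3sub _ h₂) hadj
        rcases hBedge_cases hmem with h | h
        · exfalso
          have hcmem : c' ∈ s(z₁, z₂) := h ▸ Sym2.mem_mk_left c' p₂
          rcases Sym2.mem_iff.mp hcmem with h' | h'
          · exact hc'B₃ (h' ▸ h₁)
          · exact hc'B₃ (h' ▸ h₂)
        · left; rw [hRedges]; exact Or.inl h
      · exact Or.inl (hxBW z₁ h₁ z₂ h₂ hadj)
      · rw [h₂]; rw [h₂] at hadj
        right
        have hq := hxCB z₁ h₁ hadj.symm
        rw [Sym2.eq_swap (a := z₁) (b := c'), hq, Sym2.eq_swap]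
    · rcases hz₂ with h₂ | h₂ | h₂
      · left; rw [Sym2.eq_swap]; exact hxBW z₂ h₂ z₁ h₁ hadj.symm
      · have hmem := hWind z₁ (hW₁subW _ h₁) z₂ (hW₁subW _ h₂) hadj
        rcases hWedge_cases hmem with h | h
        · exfalso
          have hamem : a ∈ s(z₁, z₂) := h ▸ Sym2.mem_mk_left a w₁
          rcases Sym2.mem_iff.mp hamem with h' | h'
          · exact haW₁ (h' ▸ h₁)
          · exact haW₁ (h' ▸ h₂)
        · left; rw [hRedges]; exact Or.inr (Or.inl h)
      · rw [h₂]; rw [h₂] at hadj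
        left; rw [Sym2.eq_swap]; exact hxCW z₁ h₁ hadj.symm
    · rcases hz₂ with h₂ | h₂ | h₂
      · rw [h₁]; rw [h₁] at hadj
        right
        rw [hxCB z₂ h₂ hadj, Sym2.eq_swap]
      · rw [h₁]; rw [h₁] at hadj
        left; exact hxCW z₂ h₂ hadj
      · rw [h₁, h₂] at hadj; exact absurd rfl hadj.ne
  apply master hhed hc R hRpath hRlen hclose hind (s(w₁, c'))
  intro hiff
  have hmem : s(w₁, c') ∈ cw.edges := by
    apply hiff.mp
    left; rw [hRedges]; exact Or.inr (Or.inr rfl)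
  exact hw₁c (Walk.fst_mem_support_of_mem_edges cw hmem)

lemma edge_of_length_one {x y : V} {Q : G.Walk x y} (h : Q.length = 1) : s(x, y) ∈ Q.edges := by
  cases Q with
  | nil => simp at h
  | cons r q =>
    rename_i m
    rw [Walk.length_cons] at h
    have h0 : q.length = 0 := by omega
    have hm : m = y := Walk.eq_of_length_eq_zero h0
    subst hm
    simp

lemma key {v : V} {c : G.Walk v v} (hhed : HoleEdgeDisjoint G) (hc : IsHole G c) :
    ∀ n : ℕ, ∀ {a b : V}, a ∈ c.support → b ∈ c.support → a ≠ b → ¬ G.Adj a b →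
      ∀ W : G.Walk a b, W.length = n → IsCAvoidingPath G c W → False := by
  intro n
  induction n using Nat.strong_induction_on with
  | _ n IH =>
  intro a b ha hb hne hnadj W hlen hW
  obtain ⟨hWpath, hWint, _⟩ := hW
  have Hmin : ∀ {a' b' : V}, a' ∈ c.support → b' ∈ c.support → a' ≠ b' → ¬ G.Adj a' b' →
      ∀ W' : G.Walk a' b', IsCAvoidingPath G c W' → n ≤ W'.length := by
    intro a' b' ha' hb' hne' hnadj' W' hW'
    by_contra hlt
    push_neg at hlt
    exact IH W'.length hlt ha' hb' hne' hnadj' W' rfl hW'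
  have hintC : ∀ z ∈ W.support, z ≠ a → z ≠ b → z ∉ c.support := by
    intro z hz hza hzb hmem
    exact hWint z hz hza hzb (mem_avoid_of_support hmem)
  have hintX : ∀ z ∈ W.support, z ≠ a → z ≠ b → z ∉ holeNbrs G c := by
    intro z hz hza hzb hmem
    exact hWint z hz hza hzb (Set.mem_union_right _ hmem)
  have hn0 : n ≠ 0 := by
    intro h; rw [h] at hlen; exact hne (Walk.eq_of_length_eq_zero hlen)
  have hn1 : n ≠ 1 := by
    intro h; rw [h] at hlen; exact hnadj (Walk.adj_of_length_eq_one hlen)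
  have hn2 : 2 ≤ n := by omega
  -- W is an induced path
  have hWind : ∀ z₁ ∈ W.support, ∀ z₂ ∈ W.support, G.Adj z₁ z₂ → s(z₁, z₂) ∈ W.edges := by
    have shortcut : ∀ (z₁ : V) (hz₁ : z₁ ∈ W.support) (z₂ : V), G.Adj z₁ z₂ →
        s(z₁, z₂) ∉ W.edges → z₂ ∈ (W.dropUntil z₁ hz₁).support → False := by
      intro z₁ hz₁ z₂ hadj hnmem hz₂
      have hD1path : (W.dropUntil z₁ hz₁).IsPath := hWpath.dropUntil hz₁
      have hTD := length_take_add_drop (W.dropUntil z₁ hz₁) hz₂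
      have hWD := length_take_add_drop W hz₁
      have hT1 : ((W.dropUntil z₁ hz₁).takeUntil z₂ hz₂).length ≠ 0 := by
        intro h0; exact hadj.ne (Walk.eq_of_length_eq_zero h0)
      have hT2 : ((W.dropUntil z₁ hz₁).takeUntil z₂ hz₂).length ≠ 1 := by
        intro h1
        exact hnmem (Walk.edges_dropUntil_subset W hz₁
          (Walk.edges_takeUntil_subset _ hz₂ (edge_of_length_one h1)))
      set W₂ : G.Walk a b := (W.takeUntil z₁ hz₁).append
        (Walk.cons hadj ((W.dropUntil z₁ hz₁).dropUntil z₂ hz₂)) with hW₂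
      have hW₂len : W₂.length = (W.takeUntil z₁ hz₁).length +
          (((W.dropUntil z₁ hz₁).dropUntil z₂ hz₂).length + 1) := by
        rw [hW₂, Walk.length_append, Walk.length_cons]
      have hW₂path : W₂.IsPath := by
        apply append_isPath (hWpath.takeUntil hz₁)
        · rw [Walk.cons_isPath_iff]
          refine ⟨hD1path.dropUntil hz₂, ?_⟩
          intro hmem
          exact hadj.ne (mem_take_drop_eq hD1path hz₂ (Walk.start_mem_support _) hmem)
        · intro z hzT hzC
          rw [Walk.support_cons, List.mem_cons] at hzC
          rcases hzC with h | h
          · exact h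
          · exfalso
            have hzD1 : z ∈ (W.dropUntil z₁ hz₁).support :=
              Walk.support_dropUntil_subset _ hz₂ h
            have hz1 : z = z₁ := mem_take_drop_eq hWpath hz₁ hzT hzD1
            exact hadj.ne (mem_take_drop_eq hD1path hz₂ (Walk.start_mem_support _) (hz1 ▸ h))
      have hW₂sub : ∀ z ∈ W₂.support, z ∈ W.support := by
        intro z hz
        rw [hW₂, Walk.mem_support_append_iff] at hz
        rcases hz with h | h
        · exact Walk.support_takeUntil_subset W hz₁ h
        · rw [Walk.support_cons, List.mem_cons] at h
          rcases h with h | h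
          · exact h ▸ Walk.support_dropUntil_subset W hz₁ (Walk.start_mem_support _)
          · exact Walk.support_dropUntil_subset W hz₁
              (Walk.support_dropUntil_subset _ hz₂ h)
      have hW₂avoid : IsCAvoidingPath G c W₂ := by
        refine ⟨hW₂path, ?_, ?_⟩
        · intro z hz hza hzb
          exact hWint z (hW₂sub z hz) hza hzb
        · intro h1
          exact absurd (Walk.adj_of_length_eq_one h1) hnadj
      have := Hmin ha hb hne hnadj W₂ hW₂avoid
      omega
    intro z₁ hz₁ z₂ hz₂ hadj
    by_contra hnmem
    rcases mem_dropUntil_or W hWpath hz₁ hz₂ with h | h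
    · exact shortcut z₁ hz₁ z₂ hadj hnmem h
    · exact shortcut z₂ hz₂ z₁ hadj.symm (by rwa [Sym2.eq_swap]) h
  -- destructure W at both ends
  obtain ⟨w₁, h₁, W₁, hW1⟩ := Walk.not_nil_iff.mp
    (by rw [Walk.nil_iff_length_eq]; omega : ¬ W.Nil)
  obtain ⟨pn, h₂, V₂, hV2⟩ := Walk.not_nil_iff.mp
    (by rw [Walk.nil_iff_length_eq, Walk.length_reverse]; omega : ¬ W.reverse.Nil)
  have hWpath1 := hWpath
  rw [hW1] at hWpath1
  have hW₁path : W₁.IsPath := hWpath1.of_cons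
  have haW₁ : a ∉ W₁.support := ((Walk.cons_isPath_iff _ _).mp hWpath1).2
  have hw₁a : w₁ ≠ a := fun h => haW₁ (h ▸ Walk.start_mem_support W₁)
  have hW₁lenEq : n = W₁.length + 1 := by rw [← hlen, hW1, Walk.length_cons]
  have hw₁b : w₁ ≠ b := by
    intro h
    subst h
    have hzero : W₁.length = 0 := by
      rw [Walk.isPath_iff_eq_nil.mp hW₁path]; rfl
    omega
  have hw₁W : w₁ ∈ W.support := by
    rw [hW1, Walk.support_cons]; exact List.mem_cons_of_mem _ (Walk.start_mem_support _)
  have hWrevpath := hWpath.reverse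
  rw [hV2] at hWrevpath
  have hV₂path : V₂.IsPath := hWrevpath.of_cons
  have hbV₂ : b ∉ V₂.support := ((Walk.cons_isPath_iff _ _).mp hWrevpath).2
  have hpnb : pn ≠ b := fun h => hbV₂ (h ▸ Walk.start_mem_support V₂)
  have hV₂lenEq : n = V₂.length + 1 := by
    have hh : W.reverse.length = V₂.length + 1 := by rw [hV2, Walk.length_cons]
    rw [Walk.length_reverse, hlen] at hh
    exact hh
  have hpna : pn ≠ a := by
    intro h
    subst h
    have hzero : V₂.length = 0 := by
      rw [Walk.isPath_iff_eq_nil.mp hV₂path]; rfl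
    omega
  have hpnW : pn ∈ W.support := by
    have hh : pn ∈ W.reverse.support := by
      rw [hV2, Walk.support_cons]; exact List.mem_cons_of_mem _ (Walk.start_mem_support _)
    rwa [mem_reverse_support] at hh
  have hfirst : s(a, w₁) ∈ W.edges := by rw [hW1]; simp
  have hlast : s(b, pn) ∈ W.edges := by
    have hh : s(b, pn) ∈ W.reverse.edges := by rw [hV2]; simp
    rwa [mem_reverse_edges] at hh
  have hadj_a : ∀ z ∈ W.support, G.Adj a z → z = w₁ := by
    intro z hz hadj
    have hmem := hWind a (Walk.start_mem_support W) z hz hadj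
    have heq := edge_at_start_unique hWpath hmem hfirst (Sym2.mem_mk_left _ _)
      (Sym2.mem_mk_left _ _)
    rcases Sym2.eq_iff.mp heq with ⟨_, hh2⟩ | ⟨hh1, _⟩
    · exact hh2
    · exact absurd hh1.symm hw₁a
  have hadj_b : ∀ z ∈ W.support, G.Adj b z → z = pn := by
    intro z hz hadj
    have hmem := hWind b (Walk.end_mem_support W) z hz hadj
    have heq := edge_at_end_unique hWpath hmem hlast (Sym2.mem_mk_left _ _)
      (Sym2.mem_mk_left _ _)
    rcases Sym2.eq_iff.mp heq with ⟨_, hh2⟩ | ⟨hh1, _⟩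
    · exact hh2
    · exact absurd hh1.symm hpnb
  -- case n = 2
  by_cases hn2' : n = 2
  · have hadjw₁b : G.Adj w₁ b := by
      have hh : W₁.length = 1 := by omega
      exact Walk.adj_of_length_eq_one hh
    exact lemB hhed hc (hintC w₁ hw₁W hw₁a hw₁b) (hintX w₁ hw₁W hw₁a hw₁b) ha hb
      h₁.symm hadjw₁b hne hnadj
  have hn3 : 3 ≤ n := by omega
  -- short-path consequences
  have hnadj_w1b : ¬ G.Adj w₁ b := by
    intro hadj
    have hpath2 : (Walk.cons h₁ (Walk.cons hadj Walk.nil) : G.Walk a b).IsPath := by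
      rw [Walk.cons_isPath_iff]
      constructor
      · rw [Walk.cons_isPath_iff]
        exact ⟨Walk.IsPath.nil, by simp [hadj.ne]⟩
      · rw [Walk.support_cons, Walk.support_nil]
        intro hmem
        rcases List.mem_cons.mp hmem with hh | hh
        · exact hw₁a hh.symm
        · rw [List.mem_singleton] at hh; exact hne hh
    have havoid : IsCAvoidingPath G c (Walk.cons h₁ (Walk.cons hadj Walk.nil)) := by
      refine ⟨hpath2, ?_, ?_⟩
      · intro z hz hza hzb
        rw [Walk.support_cons, Walk.support_cons, Walk.support_nil] at hz
        rcases List.mem_cons.mp hz with hh | hh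
        · exact absurd hh hza
        · rcases List.mem_cons.mp hh with hh' | hh'
          · exact hh' ▸ hWint w₁ hw₁W hw₁a hw₁b
          · rw [List.mem_singleton] at hh'; exact absurd hh' hzb
      · intro h1
        rw [Walk.length_cons, Walk.length_cons, Walk.length_nil] at h1
        omega
    have := Hmin ha hb hne hnadj _ havoid
    rw [Walk.length_cons, Walk.length_cons, Walk.length_nil] at this
    omega
  have hnadj_pna : ¬ G.Adj pn a := by
    intro hadj
    have hpath2 : (Walk.cons h₂ (Walk.cons hadj Walk.nil) : G.Walk b a).IsPath := by
      rw [Walk.cons_isPath_iff]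
      constructor
      · rw [Walk.cons_isPath_iff]
        exact ⟨Walk.IsPath.nil, by simp [hadj.ne]⟩
      · rw [Walk.support_cons, Walk.support_nil]
        intro hmem
        rcases List.mem_cons.mp hmem with hh | hh
        · exact hpnb hh.symm
        · rw [List.mem_singleton] at hh; exact hne hh.symm
    have havoid : IsCAvoidingPath G c (Walk.cons h₂ (Walk.cons hadj Walk.nil)) := by
      refine ⟨hpath2, ?_, ?_⟩
      · intro z hz hzb hza
        rw [Walk.support_cons, Walk.support_cons, Walk.support_nil] at hz
        rcases List.mem_cons.mp hz with hh | hh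
        · exact absurd hh hzb
        · rcases List.mem_cons.mp hh with hh' | hh'
          · exact hh' ▸ hWint pn hpnW hpna hpnb
          · rw [List.mem_singleton] at hh'; exact absurd hh' hza
      · intro h1
        rw [Walk.length_cons, Walk.length_cons, Walk.length_nil] at h1
        omega
    have := Hmin hb ha (Ne.symm hne) (fun h => hnadj h.symm) _ havoid
    rw [Walk.length_cons, Walk.length_cons, Walk.length_nil] at this
    omega
  have hw₁pn : w₁ ≠ pn := by
    intro h
    apply hnadj_w1b
    rw [h]
    exact h₂.symm
  -- reverse transports
  have hWsupR : ∀ z : V, z ∈ W.reverse.support ↔ z ∈ W.support := fun z => mem_reverse_support W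
  have hWindR : ∀ z₁ ∈ W.reverse.support, ∀ z₂ ∈ W.reverse.support, G.Adj z₁ z₂ →
      s(z₁, z₂) ∈ W.reverse.edges := by
    intro z₁ h₁' z₂ h₂' hadj
    rw [mem_reverse_edges]
    exact hWind z₁ ((hWsupR z₁).mp h₁') z₂ ((hWsupR z₂).mp h₂') hadj
  have hintCR : ∀ z ∈ W.reverse.support, z ≠ b → z ≠ a → z ∉ c.support := by
    intro z hz hzb hza
    exact hintC z ((hWsupR z).mp hz) hza hzb
  have hWintR : ∀ z ∈ W.reverse.support, z ≠ b → z ≠ a → z ∉ avoidSet G c := by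
    intro z hz hzb hza
    exact hWint z ((hWsupR z).mp hz) hza hzb
  -- F1 lemmas
  have hF1a : ∀ z ∈ W.support, z ≠ a → z ≠ b → ∀ x ∈ c.support, x ≠ a → ¬ G.Adj a x →
      G.Adj z x → z = pn := by
    intro z hz hza hzb x hx hxa hnax hadj
    have hAdjzb : G.Adj z b := F1core ha hx W hWpath hWint
      (fun W' hW' => by rw [hlen]; exact Hmin ha hx (Ne.symm hxa) hnax W' hW')
      hz hza hzb hxa hadj
    exact hadj_b z hz hAdjzb.symm
  have hF1b : ∀ z ∈ W.support, z ≠ a → z ≠ b → ∀ x ∈ c.support, x ≠ b → ¬ G.Adj b x →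
      G.Adj z x → z = w₁ := by
    intro z hz hza hzb x hx hxb hnbx hadj
    have hAdjza : G.Adj z a := F1core hb hx W.reverse hWpath.reverse hWintR
      (fun W' hW' => by
        rw [Walk.length_reverse, hlen]
        exact Hmin hb hx (Ne.symm hxb) hnbx W' hW')
      ((hWsupR z).mpr hz) hzb hza hxb hadj
    exact hadj_a z hz hAdjza.symm
  -- contradiction machines
  have KL : ∀ z ∈ W.support, z ≠ a → z ≠ b → ∀ x₁, x₁ ∈ c.support → ∀ x₂, x₂ ∈ c.support →
      G.Adj z x₁ → G.Adj z x₂ → x₁ ≠ x₂ → ¬ G.Adj x₁ x₂ → False := by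
    intro z hz hza hzb x₁ hx₁ x₂ hx₂ ha1 ha2 hne12 hnadj12
    exact lemB hhed hc (hintC z hz hza hzb) (hintX z hz hza hzb) hx₁ hx₂ ha1 ha2 hne12 hnadj12
  have KA : ∀ x, x ∈ c.support → G.Adj x a →
      (∃ z, z ∈ W.support ∧ z ≠ a ∧ z ≠ b ∧ G.Adj z x) → ¬ G.Adj w₁ x → False := by
    rintro x hx hxa ⟨z, hz, hza, hzb, hadj⟩ hw₁x
    apply builderCA hhed hc ha hx hnadj W hWpath hWind hintC hxa hz hza hzb hadj
    intro z' hz' hadj' hadjx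
    exact hw₁x ((hadj_a z' hz' hadj') ▸ hadjx)
  have KB : ∀ x, x ∈ c.support → G.Adj x b →
      (∃ z, z ∈ W.support ∧ z ≠ a ∧ z ≠ b ∧ G.Adj z x) → ¬ G.Adj pn x → False := by
    rintro x hx hxb ⟨z, hz, hza, hzb, hadj⟩ hpnx
    apply builderCA hhed hc hb hx (fun h => hnadj h.symm) W.reverse hWpath.reverse hWindR
      hintCR hxb ((hWsupR z).mpr hz) hzb hza hadj
    intro z' hz' hadj' hadjx
    exact hpnx ((hadj_b z' ((hWsupR z').mp hz') hadj') ▸ hadjx)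
  have hb' : b ∈ (c.rotate a ha).support := mem_support_rotate hc ha hb
  have hcyc' := hc.1.rotate ha
  have hmemE : ∀ e : Sym2 V, e ∈ (c.rotate a ha).edges ↔ e ∈ c.edges :=
    fun e => (c.rotate_edges a ha).mem_iff
  have htailmem : ∀ z : V, z ∈ (c.rotate a ha).support.tail ↔ z ∈ c.support.tail :=
    fun z => (Walk.support_rotate c a ha).mem_iff
  obtain ⟨a₁, rc, p, hEq⟩ := Walk.not_nil_iff.mp
    (by rw [Walk.nil_iff_length_eq]
        have hh := hc.2.1
        show ¬ ((c.dropUntil a ha).append (c.takeUntil a ha)).length = 0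
        have h1 := congrArg Walk.length (c.take_spec ha)
        rw [Walk.length_append] at h1
        rw [Walk.length_append]; omega : ¬ (c.rotate a ha).Nil)
  have hpc : ∀ z ∈ p.support, z ∈ c.support := by
    intro z hz
    have hz' : z ∈ (c.rotate a ha).support.tail := by
      rw [hEq, Walk.support_cons]; exact hz
    rw [htailmem] at hz'
    rw [Walk.support_eq_cons c]
    exact List.mem_cons_of_mem _ hz'
  have hppath : p.IsPath := Walk.IsPath.mk' (by
    have h2 := hcyc'.support_nodup; rw [hEq] at h2; simpa using h2)
  have hpedges : ∀ e ∈ p.edges, e ∈ c.edges := by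
    intro e he
    rw [← hmemE, hEq, Walk.edges_cons]
    exact List.mem_cons_of_mem _ he
  have hrcE : s(a, a₁) ∈ c.edges := by
    rw [← hmemE, hEq, Walk.edges_cons]; exact List.mem_cons_self
  have hbp : b ∈ p.support := by
    have hh := hb'
    rw [hEq, Walk.support_cons, List.mem_cons] at hh
    rcases hh with hh | hh
    · exact absurd hh (Ne.symm hne)
    · exact hh
  set Parc : G.Walk a b := Walk.cons rc (p.takeUntil b hbp) with hParc
  have htakepath : (p.takeUntil b hbp).IsPath := hppath.takeUntil hbp
  have hanotintake : a ∉ (p.takeUntil b hbp).support := by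
    intro hmem
    exact hne (end_eq_of_mem_takeUntil hppath hbp hmem)
  have hPpath : Parc.IsPath := by
    rw [hParc, Walk.cons_isPath_iff]
    exact ⟨htakepath, hanotintake⟩
  have hPsup : ∀ z : V, z ∈ Parc.support ↔ z = a ∨ z ∈ (p.takeUntil b hbp).support := by
    intro z; rw [hParc, Walk.support_cons, List.mem_cons]
  have hPedges : ∀ e : Sym2 V, e ∈ Parc.edges ↔
      e = s(a, a₁) ∨ e ∈ (p.takeUntil b hbp).edges := by
    intro e; rw [hParc, Walk.edges_cons, List.mem_cons]
  have hPE : ∀ e ∈ Parc.edges, e ∈ c.edges := by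
    intro e he
    rcases (hPedges e).mp he with h | h
    · exact h ▸ hrcE
    · exact hpedges e (Walk.edges_takeUntil_subset p hbp h)
  have hPsupc : ∀ z ∈ Parc.support, z ∈ c.support := by
    intro z hz
    rcases (hPsup z).mp hz with h | h
    · exact h ▸ ha
    · exact hpc z (Walk.support_takeUntil_subset p hbp h)
  have hPlen : 2 ≤ Parc.length := by
    have h0 : Parc.length ≠ 0 := by rw [hParc, Walk.length_cons]; omega
    have h1 : Parc.length ≠ 1 := fun h => hnadj (Walk.adj_of_length_eq_one h)
    omega
  set Qarc : G.Walk b a := p.dropUntil b hbp with hQarc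
  have hQpath : Qarc.IsPath := hppath.dropUntil hbp
  have hQE : ∀ e ∈ Qarc.edges, e ∈ c.edges := fun e he =>
    hpedges e (Walk.edges_dropUntil_subset p hbp he)
  have hQsupc : ∀ z ∈ Qarc.support, z ∈ c.support := fun z hz =>
    hpc z (Walk.support_dropUntil_subset p hbp hz)
  have hQlen : 2 ≤ Qarc.length := by
    have h0 : Qarc.length ≠ 0 := fun h => hne (Walk.eq_of_length_eq_zero h).symm
    have h1 : Qarc.length ≠ 1 := fun h => hnadj (Walk.adj_of_length_eq_one h).symm
    omega
  have hPQ : ∀ z, z ∈ Parc.support → z ∈ Qarc.support → z = a ∨ z = b := by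
    intro z hz1 hz2
    rcases (hPsup z).mp hz1 with h | h
    · exact Or.inl h
    · exact Or.inr (mem_take_drop_eq hppath hbp h hz2)
  have hcrossQ : ∀ z₁ ∈ Parc.support, z₁ ≠ a → z₁ ≠ b →
      ∀ z₂ ∈ Qarc.support, z₂ ≠ a → z₂ ≠ b → ¬ G.Adj z₁ z₂ := by
    intro z₁ hz₁ h1a h1b z₂ hz₂ h2a h2b hadj
    have he : s(z₁, z₂) ∈ c.edges := hc.2.2 z₁ (hPsupc _ hz₁) z₂ (hQsupc _ hz₂) hadj
    rw [← hmemE, hEq, Walk.edges_cons, List.mem_cons] at he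
    rcases he with h | h
    · have hamem : a ∈ s(z₁, z₂) := h ▸ Sym2.mem_mk_left a a₁
      rcases Sym2.mem_iff.mp hamem with h' | h'
      · exact h1a h'.symm
      · exact h2a h'.symm
    · rw [edges_split p hbp, List.mem_append] at h
      rcases h with h | h
      · have hz₂take : z₂ ∈ (p.takeUntil b hbp).support :=
          Walk.snd_mem_support_of_mem_edges _ h
        exact h2b (mem_take_drop_eq hppath hbp hz₂take hz₂)
      · have hz₁drop : z₁ ∈ (p.dropUntil b hbp).support :=
          Walk.fst_mem_support_of_mem_edges _ h
        have hz₁take : z₁ ∈ (p.takeUntil b hbp).support := by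
          rcases (hPsup z₁).mp hz₁ with h' | h'
          · exact absurd h' h1a
          · exact h'
        exact h1b (mem_take_drop_eq hppath hbp hz₁take hz₁drop)
  have type : ∀ x, x ∈ c.support → x ≠ a → x ≠ b →
      (∃ z, z ∈ W.support ∧ z ≠ a ∧ z ≠ b ∧ G.Adj z x) →
      (G.Adj x a ∧ G.Adj w₁ x) ∨ (G.Adj x b ∧ G.Adj pn x) := by
    rintro x hx hxa hxb ⟨z, hz, hza, hzb, hadj⟩
    by_cases hxa' : G.Adj x a
    · by_cases hw₁x : G.Adj w₁ x
      · exact Or.inl ⟨hxa', hw₁x⟩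
      · exact (KA x hx hxa' ⟨z, hz, hza, hzb, hadj⟩ hw₁x).elim
    · have hzpn : z = pn := hF1a z hz hza hzb x hx hxa (fun h => hxa' h.symm) hadj
      by_cases hxb' : G.Adj x b
      · exact Or.inr ⟨hxb', hzpn ▸ hadj⟩
      · have hzw₁ : z = w₁ := hF1b z hz hza hzb x hx hxb (fun h => hxb' h.symm) hadj
        exact absurd (hzw₁.symm.trans hzpn) hw₁pn
  have hWlen2 : 2 ≤ W.length := by omega
  by_cases HP : ∃ x, x ∈ Parc.support ∧ x ≠ a ∧ x ≠ b ∧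
      ∃ z, z ∈ W.support ∧ z ≠ a ∧ z ≠ b ∧ G.Adj z x
  · by_cases HQ : ∃ x, x ∈ Qarc.support ∧ x ≠ a ∧ x ≠ b ∧
        ∃ z, z ∈ W.support ∧ z ≠ a ∧ z ≠ b ∧ G.Adj z x
    · obtain ⟨xP, hxP, hxPa, hxPb, hwitP⟩ := HP
      obtain ⟨xQ, hxQ, hxQa, hxQb, hwitQ⟩ := HQ
      have hxPc : xP ∈ c.support := hPsupc _ hxP
      have hxQc : xQ ∈ c.support := hQsupc _ hxQ
      have hPQnadj : ¬ G.Adj xP xQ := hcrossQ xP hxP hxPa hxPb xQ hxQ hxQa hxQb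
      have hPQne : xP ≠ xQ := by
        intro h
        rcases hPQ xP hxP (h ▸ hxQ) with h' | h'
        · exact hxPa h'
        · exact hxPb h'
      rcases type xP hxPc hxPa hxPb hwitP with ⟨hxPadja, hw₁xP⟩ | ⟨hxPadjb, hpnxP⟩
      · rcases type xQ hxQc hxQa hxQb hwitQ with ⟨hxQadja, hw₁xQ⟩ | ⟨hxQadjb, hpnxQ⟩
        · exact KL w₁ hw₁W hw₁a hw₁b xP hxPc xQ hxQc hw₁xP hw₁xQ hPQne hPQnadj
        · by_cases hpnxP' : G.Adj pn xP
          · exact KL pn hpnW hpna hpnb xP hxPc xQ hxQc hpnxP' hpnxQ hPQne hPQnadj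
          by_cases hxPb' : G.Adj xP b
          · exact KB xP hxPc hxPb' ⟨w₁, hw₁W, hw₁a, hw₁b, hw₁xP⟩ hpnxP'
          have hsaxP : s(a, xP) ∈ Parc.edges := by
            rcases subarc_edge hc hPpath hPE (Walk.start_mem_support Parc) hxP ha hxPc
              hxPadja.symm with h | h
            · exact h
            · exfalso
              rcases Sym2.eq_iff.mp h with ⟨_, h2⟩ | ⟨h1, _⟩
              · exact hxPb h2
              · exact hne h1
          have huniqa : ∀ z ∈ Parc.support, G.Adj a z → z = xP := by
            intro z hzmem hadj
            have hmem : s(a, z) ∈ Parc.edges := by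
              rcases subarc_edge hc hPpath hPE (Walk.start_mem_support Parc) hzmem ha
                (hPsupc _ hzmem) hadj with h | h
              · exact h
              · exfalso
                rcases Sym2.eq_iff.mp h with ⟨_, h2⟩ | ⟨h1, _⟩
                · rw [h2] at hadj; exact hnadj hadj
                · exact hne h1
            have heq := edge_at_start_unique hPpath hmem hsaxP (Sym2.mem_mk_left _ _)
              (Sym2.mem_mk_left _ _)
            rcases Sym2.eq_iff.mp heq with ⟨_, h2⟩ | ⟨h1, _⟩
            · exact h2
            · exfalso; rw [← h1] at hxPadja; exact G.irrefl hxPadja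
          have hBpath : (Parc.dropUntil xP hxP).IsPath := hPpath.dropUntil hxP
          have hBE : ∀ e ∈ (Parc.dropUntil xP hxP).edges, e ∈ c.edges := fun e he =>
            hPE e (Walk.edges_dropUntil_subset _ hxP he)
          have hBsub : ∀ z ∈ (Parc.dropUntil xP hxP).support, z ∈ Parc.support :=
            fun z hz => Walk.support_dropUntil_subset _ hxP hz
          have hBsup : ∀ z ∈ (Parc.dropUntil xP hxP).support, z ∈ c.support :=
            fun z hz => hPsupc z (hBsub z hz)
          have haB : a ∉ (Parc.dropUntil xP hxP).support := by
            intro hmem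
            exact hxPa (mem_take_drop_eq hPpath hxP (Walk.start_mem_support _) hmem).symm
          have hBlen : 2 ≤ (Parc.dropUntil xP hxP).length := by
            have h0 : (Parc.dropUntil xP hxP).length ≠ 0 :=
              fun h => hxPb (Walk.eq_of_length_eq_zero h)
            have h1 : (Parc.dropUntil xP hxP).length ≠ 1 :=
              fun h => hxPb' (Walk.adj_of_length_eq_one h)
            omega
          have hw₁only : ∀ z ∈ (Parc.dropUntil xP hxP).support, z ≠ xP → ¬ G.Adj w₁ z := by
            intro z hzB hzxP hadjw₁z
            have hzc : z ∈ c.support := hBsup z hzB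
            by_cases hzb : z = b
            · exact hnadj_w1b (hzb ▸ hadjw₁z)
            · have hza : z ≠ a := fun h => haB (h ▸ hzB)
              by_cases hAdjaz : G.Adj a z
              · exact hzxP (huniqa z (hBsub z hzB) hAdjaz)
              · exact hw₁pn (hF1a w₁ hw₁W hw₁a hw₁b z hzc hza hAdjaz hadjw₁z)
          have hrest : ∀ z' ∈ W₁.support, z' ≠ w₁ → z' ≠ b →
              ∀ z ∈ (Parc.dropUntil xP hxP).support, z ≠ b → ¬ G.Adj z' z := by
            intro z' hz' hz'w hz'b z hzB hzb hadjzz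
            have hz'W : z' ∈ W.support := by
              rw [hW1, Walk.support_cons]; exact List.mem_cons_of_mem _ hz'
            have hz'a : z' ≠ a := fun h => haW₁ (h ▸ hz')
            have hzc : z ∈ c.support := hBsup z hzB
            have hza : z ≠ a := fun h => haB (h ▸ hzB)
            by_cases hzxP : z = xP
            · exact hz'w (hF1b z' hz'W hz'a hz'b xP hxPc hxPb (fun h => hxPb' h.symm)
                (hzxP ▸ hadjzz))
            · by_cases hAdjaz : G.Adj a z
              · exact hzxP (huniqa z (hBsub z hzB) hAdjaz)
              · have hz'pn : z' = pn := hF1a z' hz'W hz'a hz'b z hzc hza hAdjaz hadjzz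
                by_cases hAdjzb : G.Adj z b
                · have hzQne : z ≠ xQ := by
                    intro h
                    rcases hPQ z (hBsub z hzB) (h ▸ hxQ) with h' | h'
                    · exact hza h'
                    · exact hzb h'
                  exact KL pn hpnW hpna hpnb z hzc xQ hxQc (hz'pn ▸ hadjzz) hpnxQ hzQne
                    (hcrossQ z (hBsub z hzB) hza hzb xQ hxQ hxQa hxQb)
                · have hz'w₁ : z' = w₁ := hF1b z' hz'W hz'a hz'b z hzc hzb
                    (fun h => hAdjzb h.symm) hadjzz
                  exact hw₁pn (hz'w₁.symm.trans hz'pn)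
          have hWpathC : (Walk.cons h₁ W₁).IsPath := by rw [← hW1]; exact hWpath
          have hWlenC : 3 ≤ (Walk.cons h₁ W₁).length := by rw [← hW1]; omega
          have hWindC : ∀ z₁ ∈ (Walk.cons h₁ W₁).support, ∀ z₂ ∈ (Walk.cons h₁ W₁).support,
              G.Adj z₁ z₂ → s(z₁, z₂) ∈ (Walk.cons h₁ W₁).edges := by
            rw [← hW1]; exact hWind
          have hWCC : ∀ z ∈ (Walk.cons h₁ W₁).support, z ≠ a → z ≠ b → z ∉ c.support := by
            rw [← hW1]; exact hintC
          exact builderD1 hhed hc hne h₁ W₁ hWpathC hWlenC hWindC hWCC hxPc hxPb'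
            (Parc.dropUntil xP hxP) hBpath hBE hBsup hBlen hw₁xP hw₁only hrest
      · rcases type xQ hxQc hxQa hxQb hwitQ with ⟨hxQadja, hw₁xQ⟩ | ⟨hxQadjb, hpnxQ⟩
        · by_cases hw₁xP' : G.Adj w₁ xP
          · exact KL w₁ hw₁W hw₁a hw₁b xP hxPc xQ hxQc hw₁xP' hw₁xQ hPQne hPQnadj
          by_cases hxPa' : G.Adj xP a
          · exact KA xP hxPc hxPa' ⟨pn, hpnW, hpna, hpnb, hpnxP⟩ hw₁xP'
          have hsbxP : s(b, xP) ∈ Parc.edges := by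
            rcases subarc_edge hc hPpath hPE (Walk.end_mem_support Parc) hxP hb hxPc
              hxPadjb.symm with h | h
            · exact h
            · exfalso
              rcases Sym2.eq_iff.mp h with ⟨h1, _⟩ | ⟨_, h2⟩
              · exact hne h1.symm
              · exact hxPa h2
          have huniqb : ∀ z ∈ Parc.support, G.Adj b z → z = xP := by
            intro z hzmem hadj
            have hmem : s(b, z) ∈ Parc.edges := by
              rcases subarc_edge hc hPpath hPE (Walk.end_mem_support Parc) hzmem hb
                (hPsupc _ hzmem) hadj with h | h
              · exact h
              · exfalso
                rcases Sym2.eq_iff.mp h with ⟨h1, _⟩ | ⟨_, h2⟩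
                · exact hne h1.symm
                · rw [h2] at hadj; exact hnadj hadj.symm
            have heq := edge_at_end_unique hPpath hmem hsbxP (Sym2.mem_mk_left _ _)
              (Sym2.mem_mk_left _ _)
            rcases Sym2.eq_iff.mp heq with ⟨_, h2⟩ | ⟨h1, _⟩
            · exact h2
            · exfalso; rw [← h1] at hxPadjb; exact G.irrefl hxPadjb
          have hB'path : ((Parc.takeUntil xP hxP).reverse).IsPath := (hPpath.takeUntil hxP).reverse
          have hB'E : ∀ e ∈ ((Parc.takeUntil xP hxP).reverse).edges, e ∈ c.edges := by
            intro e he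
            rw [mem_reverse_edges] at he
            exact hPE e (Walk.edges_takeUntil_subset _ hxP he)
          have hB'subP : ∀ z ∈ ((Parc.takeUntil xP hxP).reverse).support, z ∈ Parc.support := by
            intro z hz
            rw [mem_reverse_support] at hz
            exact Walk.support_takeUntil_subset _ hxP hz
          have hB'sup : ∀ z ∈ ((Parc.takeUntil xP hxP).reverse).support, z ∈ c.support :=
            fun z hz => hPsupc z (hB'subP z hz)
          have hbB' : b ∉ ((Parc.takeUntil xP hxP).reverse).support := by
            intro hmem
            rw [mem_reverse_support] at hmem
            exact hxPb (end_eq_of_mem_takeUntil hPpath hxP hmem).symm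
          have hB'len : 2 ≤ ((Parc.takeUntil xP hxP).reverse).length := by
            rw [Walk.length_reverse]
            have h0 : (Parc.takeUntil xP hxP).length ≠ 0 :=
              fun h => hxPa (Walk.eq_of_length_eq_zero h).symm
            have h1 : (Parc.takeUntil xP hxP).length ≠ 1 :=
              fun h => hxPa' (Walk.adj_of_length_eq_one h).symm
            omega
          have hpnonly : ∀ z ∈ ((Parc.takeUntil xP hxP).reverse).support, z ≠ xP →
              ¬ G.Adj pn z := by
            intro z hzB hzxP hadjpnz
            have hzc : z ∈ c.support := hB'sup z hzB
            by_cases hza : z = a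
            · exact hnadj_pna (hza ▸ hadjpnz)
            · have hzb : z ≠ b := fun h => hbB' (h ▸ hzB)
              by_cases hAdjbz : G.Adj b z
              · exact hzxP (huniqb z (hB'subP z hzB) hAdjbz)
              · exact hw₁pn (hF1b pn hpnW hpna hpnb z hzc hzb hAdjbz hadjpnz).symm
          have hrest' : ∀ z' ∈ V₂.support, z' ≠ pn → z' ≠ a →
              ∀ z ∈ ((Parc.takeUntil xP hxP).reverse).support, z ≠ a → ¬ G.Adj z' z := by
            intro z' hz' hz'pn hz'a z hzB hza hadjzz
            have hz'W : z' ∈ W.support := by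
              have hh : z' ∈ W.reverse.support := by
                rw [hV2, Walk.support_cons]; exact List.mem_cons_of_mem _ hz'
              rwa [mem_reverse_support] at hh
            have hz'b : z' ≠ b := fun h => hbV₂ (h ▸ hz')
            have hzc : z ∈ c.support := hB'sup z hzB
            have hzb : z ≠ b := fun h => hbB' (h ▸ hzB)
            by_cases hzxP : z = xP
            · exact hz'pn (hF1a z' hz'W hz'a hz'b xP hxPc hxPa
                (fun h => hxPa' h.symm) (hzxP ▸ hadjzz))
            · by_cases hAdjbz : G.Adj b z
              · exact hzxP (huniqb z (hB'subP z hzB) hAdjbz)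
              · have hz'w₁ : z' = w₁ := hF1b z' hz'W hz'a hz'b z hzc hzb hAdjbz hadjzz
                by_cases hAdjaz : G.Adj a z
                · have hzQne : z ≠ xQ := by
                    intro h
                    rcases hPQ z (hB'subP z hzB) (h ▸ hxQ) with h' | h'
                    · exact hza h'
                    · exact hzb h'
                  exact KL w₁ hw₁W hw₁a hw₁b z hzc xQ hxQc (hz'w₁ ▸ hadjzz) hw₁xQ hzQne
                    (hcrossQ z (hB'subP z hzB) hza hzb xQ hxQ hxQa hxQb)
                · have hz'pn2 : z' = pn := hF1a z' hz'W hz'a hz'b z hzc hza hAdjaz hadjzz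
                  exact hw₁pn (hz'w₁.symm.trans hz'pn2)
          have hWpathC : (Walk.cons h₂ V₂).IsPath := by rw [← hV2]; exact hWpath.reverse
          have hWlenC : 3 ≤ (Walk.cons h₂ V₂).length := by
            rw [← hV2, Walk.length_reverse]; omega
          have hWindC : ∀ z₁ ∈ (Walk.cons h₂ V₂).support, ∀ z₂ ∈ (Walk.cons h₂ V₂).support,
              G.Adj z₁ z₂ → s(z₁, z₂) ∈ (Walk.cons h₂ V₂).edges := by
            rw [← hV2]; exact hWindR
          have hWCC : ∀ z ∈ (Walk.cons h₂ V₂).support, z ≠ b → z ≠ a → z ∉ c.support := by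
            rw [← hV2]; exact hintCR
          exact builderD1 hhed hc (Ne.symm hne) h₂ V₂ hWpathC hWlenC hWindC hWCC hxPc hxPa'
            ((Parc.takeUntil xP hxP).reverse) hB'path hB'E hB'sup hB'len hpnxP hpnonly hrest'
        · exact KL pn hpnW hpna hpnb xP hxPc xQ hxQc hpnxP hpnxQ hPQne hPQnadj
    · apply builderWARC hhed hc ha hne hnadj W hWpath hWlen2 hWind hintC Qarc.reverse
        hQpath.reverse ?_ ?_ ?_ ?_
      · intro e he; exact hQE e ((mem_reverse_edges Qarc).mp he)
      · intro z hz; exact hQsupc z ((mem_reverse_support Qarc).mp hz)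
      · rw [Walk.length_reverse]; exact hQlen
      · intro z hz hza hzb z' hz' hz'a hz'b hadj
        exact HQ ⟨z, (mem_reverse_support Qarc).mp hz, hza, hzb, z', hz', hz'a, hz'b, hadj⟩
  · apply builderWARC hhed hc ha hne hnadj W hWpath hWlen2 hWind hintC Parc hPpath hPE
      hPsupc hPlen
    intro z hz hza hzb z' hz' hz'a hz'b hadj
    exact HP ⟨z, hz, hza, hzb, z', hz', hz'a, hz'b, hadj⟩


end CAvoid

end Aux

/-- In a `K_{2,2,2}`-free hole-edge-disjoint graph, there is no `C`-avoiding
path between two non-adjacent vertices of a hole `C`. -/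
theorem no_C_avoiding_path_between_nonadjacent_hole_vertices
    {V : Type u} (G : SimpleGraph V) (hfree : K222Free G) (hhed : HoleEdgeDisjoint G)
    {v : V} (c : G.Walk v v) (hc : IsHole G c)
    {a b : V} (ha : a ∈ c.support) (hb : b ∈ c.support)
    (hne : a ≠ b) (hnadj : ¬ G.Adj a b) (W : G.Walk a b) :
    ¬ IsCAvoidingPath G c W := by
  classical
  intro hW
  exact CAvoid.key hhed hc W.length ha hb hne hnadj W rfl hW
end

section
/- Let G be a K_{2,2,2}-free hole-edge-disjoint simple graph and let C be a hole of G. Then the set X_C of vertices adjacent to every vertex of C is a clique of G. -/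
open SimpleGraph

universe u

set_option maxHeartbeats 1000000 in
lemma hole4 {V : Type u} {G : SimpleGraph V} {x p y q : V}
    (hxp : G.Adj x p) (hpy : G.Adj p y) (hyq : G.Adj y q) (hqx : G.Adj q x)
    (hxy : x ≠ y) (hpq : p ≠ q) (hnxy : ¬ G.Adj x y) (hnpq : ¬ G.Adj p q) :
    IsHole G (Walk.cons hxp (Walk.cons hpy (Walk.cons hyq (Walk.cons hqx Walk.nil)))) := by
  have hxp' := hxp.ne
  have hpy' := hpy.ne
  have hyq' := hyq.ne
  have hqx' := hqx.ne
  refine ⟨?_, by simp, ?_⟩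
  · simp [Walk.isCycle_def, Walk.isTrail_def, List.Nodup, List.pairwise_cons, Sym2.eq_iff]
    aesop
  · intro a ha b hb hab
    simp only [Walk.support_cons, Walk.support_nil, List.mem_cons, List.not_mem_nil,
      or_false] at ha hb
    simp only [Walk.edges_cons, Walk.edges_nil, List.mem_cons, List.not_mem_nil, or_false,
      Sym2.eq_iff]
    rcases ha with rfl|rfl|rfl|rfl|rfl <;> rcases hb with rfl|rfl|rfl|rfl|rfl <;>
      first
        | exact absurd hab G.irrefl
        | exact absurd hab hnxy
        | exact absurd hab hnpq
        | exact absurd hab.symm hnxy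
        | exact absurd hab.symm hnpq
        | simp

set_option maxHeartbeats 4000000 in
/-- In a `K_{2,2,2}`-free hole-edge-disjoint graph, the set `X_C` of vertices
adjacent to every vertex of a hole `C` is a clique. -/
theorem holeNbrs_isClique
    {V : Type u} (G : SimpleGraph V) (hfree : K222Free G) (hhed : HoleEdgeDisjoint G)
    {v : V} (c : G.Walk v v) (hc : IsHole G c) :
    G.IsClique (holeNbrs G c) := by
  intro x hx y hy hne
  by_contra hnadj
  obtain ⟨hcyc, hlen, hind⟩ := hc
  cases c with
  | nil => simp at hlen
  | cons h01 c1 =>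
  rename_i a
  cases c1 with
  | nil => simp at hlen
  | cons h12 c2 =>
  rename_i b
  cases c2 with
  | nil => simp at hlen
  | cons h23 rest =>
  rename_i d
  cases rest with
  | nil => simp at hlen
  | cons h34 rest' =>
  rename_i e
  -- distinctness from nodup of the cycle support tail
  have hnd : (a :: b :: d :: rest'.support).Nodup := by
    have := hcyc.support_nodup
    simpa [Walk.support_cons] using this
  simp only [List.nodup_cons, List.mem_cons] at hnd
  obtain ⟨ha', hb', hd', hnd'⟩ := hnd
  push_neg at ha' hb'
  obtain ⟨hab, had, haR⟩ := ha'
  obtain ⟨hbd, hbR⟩ := hb'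
  have hvR : v ∈ rest'.support := rest'.end_mem_support
  have hav : a ≠ v := fun h => haR (h ▸ hvR)
  have hbv : b ≠ v := fun h => hbR (h ▸ hvR)
  have hdv : d ≠ v := fun h => hd' (h ▸ hvR)
  have hva := h01.ne
  -- adjacency of x and y to the cycle vertices
  have hxv : G.Adj x v := hx v (by simp)
  have hxa : G.Adj x a := hx a (by simp)
  have hxb : G.Adj x b := hx b (by simp)
  have hxd : G.Adj x d := hx d (by simp)
  have hyv : G.Adj y v := hy v (by simp)
  have hya : G.Adj y a := hy a (by simp)
  have hyb : G.Adj y b := hy b (by simp)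
  have hyd : G.Adj y d := hy d (by simp)
  -- v and b are nonadjacent
  have hnvb : ¬ G.Adj v b := by
    intro h
    have he := hind v (by simp) b (by simp) h
    simp only [Walk.edges_cons, List.mem_cons, Sym2.eq_iff] at he
    rcases he with (⟨_, h2⟩|⟨h1, _⟩)|(⟨h1, _⟩|⟨h1, _⟩)|(⟨h1, _⟩|⟨h1, _⟩)|(⟨h1, _⟩|⟨_, h2⟩)|hm
    · exact hab h2.symm
    · exact hva h1
    · exact hva h1
    · exact hbv h1.symm
    · exact hbv h1.symm
    · exact hdv h1.symm
    · exact hdv h1.symm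
    · exact hbd h2
    · exact hbR (Walk.snd_mem_support_of_mem_edges _ hm)
  cases rest' with
  | nil =>
    -- the hole is a 4-cycle v a b d; build a K222
    -- here e = v and h34 : G.Adj d v
    have hnad : ¬ G.Adj a d := by
      intro h
      have he := hind a (by simp) d (by simp) h
      simp only [Walk.edges_cons, Walk.edges_nil, List.mem_cons, List.not_mem_nil, or_false,
        Sym2.eq_iff] at he
      rcases he with (⟨h1, _⟩|⟨_, h2⟩)|(⟨_, h2⟩|⟨h1, _⟩)|(⟨h1, _⟩|⟨h1, _⟩)|(⟨h1, _⟩|⟨h1, _⟩)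
      · exact hav h1
      · exact hdv h2
      · exact hbd h2.symm
      · exact hab h1
      · exact hab h1
      · exact had h1
      · exact had h1
      · exact hav h1
    have hnxv := hxv.ne
    have hnxa := hxa.ne
    have hnxb := hxb.ne
    have hnxd := hxd.ne
    have hnyv := hyv.ne
    have hnya := hya.ne
    have hnyb := hyb.ne
    have hnyd := hyd.ne
    have hnvb' : ¬ G.Adj b v := fun h => hnvb h.symm
    have hnad' : ¬ G.Adj d a := fun h => hnad h.symm
    have hnadj' : ¬ G.Adj y x := fun h => hnadj h.symm
    refine hfree ⟨fun pq => ![![x, y], ![v, b], ![a, d]] pq.1 pq.2, ?_, ?_⟩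
    · rintro ⟨p1, p2⟩ ⟨q1, q2⟩ h
      fin_cases p1 <;> fin_cases p2 <;> fin_cases q1 <;> fin_cases q2 <;>
        simp_all
    · rintro ⟨p1, p2⟩ ⟨q1, q2⟩
      fin_cases p1 <;> fin_cases p2 <;> fin_cases q1 <;> fin_cases q2 <;>
        simp [K222, hxv, hxa, hxb, hxd, hyv, hya, hyb, hyd, hxv.symm, hxa.symm, hxb.symm,
          hxd.symm, hyv.symm, hya.symm, hyb.symm, hyd.symm, h01, h12, h23, h34, h01.symm,
          h12.symm, h23.symm, h34.symm, hnadj, hnadj', hnvb, hnvb', hnad, hnad']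
  | cons h45 rest'' =>
    rename_i f
    -- long cycle: v and d are nonadjacent
    have hvR'' : v ∈ rest''.support := rest''.end_mem_support
    simp only [Walk.support_cons, List.nodup_cons, List.mem_cons] at hnd'
    have hev : e ≠ v := fun h => hnd'.1 (h ▸ hvR'')
    have hdR'' : d ∉ rest''.support := fun h => hd' (by simp [h])
    have hnvd : ¬ G.Adj v d := by
      intro h
      have he := hind v (by simp) d (by simp) h
      simp only [Walk.edges_cons, List.mem_cons, Sym2.eq_iff] at he
      rcases he with (⟨_, h2⟩|⟨h1, _⟩)|(⟨h1, _⟩|⟨h1, _⟩)|(⟨h1, _⟩|⟨h1, _⟩)|(⟨h1, _⟩|⟨h1, _⟩)|(⟨h1, _⟩|⟨_, h2⟩)|hm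
      · exact had h2.symm
      · exact hva h1
      · exact hva h1
      · exact hbv h1.symm
      · exact hbv h1.symm
      · exact hdv h1.symm
      · exact hdv h1.symm
      · exact hev h1.symm
      · exact hev h1.symm
      · exact h34.ne h2
      · exact hdR'' (Walk.snd_mem_support_of_mem_edges _ hm)
    have h1 := hole4 hxv hyv.symm hyb hxb.symm hne hbv.symm hnadj hnvb
    have h2 := hole4 hxv hyv.symm hyd hxd.symm hne hdv.symm hnadj hnvd
    rcases hhed x x _ _ h1 h2 with heq | hdis
    · have hm : s(y, b) ∈ (Walk.cons hxv (Walk.cons hyv.symm (Walk.cons hyd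
          (Walk.cons hxd.symm Walk.nil)))).edges := by
        have := (Set.ext_iff.mp heq s(y, b)).mp (by simp)
        exact this
      simp only [Walk.edges_cons, Walk.edges_nil, List.mem_cons, List.not_mem_nil, or_false,
        Sym2.eq_iff] at hm
      rcases hm with (⟨h1', _⟩|⟨h1', _⟩)|(⟨h1', _⟩|⟨_, h2'⟩)|(⟨_, h2'⟩|⟨h1', _⟩)|(⟨h1', _⟩|⟨h1', _⟩)
      · exact hne h1'.symm
      · exact hyv.ne h1'
      · exact hyv.ne h1'
      · exact hbv h2'
      · exact hbd h2'
      · exact hyd.ne h1'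
      · exact hyd.ne h1'
      · exact hne h1'.symm
    · exact hdis s(x, v) (by simp) (by simp)
end

section
/- Let G be a hole-edge-disjoint simple graph, let C be a hole of G, and let e = uv be an edge of C. Then S_{C,e} is nonempty if and only if T_{C,e} is nonempty. -/
open SimpleGraph

universe u

/-- If a path from `a` to `b` contains the edge `s(a,b)`, it has length 1. -/
private lemma path_edge_ends {V : Type u} {G : SimpleGraph V} {a b : V}
    {W : G.Walk a b} (hW : W.IsPath) (h : s(a, b) ∈ W.edges) : W.length = 1 := by
  cases W with
  | nil => simp at h
  | @cons _ w _ hadj q =>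
    rw [Walk.edges_cons, List.mem_cons] at h
    rw [Walk.cons_isPath_iff] at hW
    rcases h with h | h
    · have hbw : b = w := Sym2.congr_right.mp h
      subst hbw
      rw [Walk.isPath_iff_eq_nil] at hW
      rw [hW.1]
      simp
    · exact absurd (Walk.fst_mem_support_of_mem_edges q h) hW.2

/-- A walk from `a` to `b` of length 1 contains the edge `s(a,b)`. -/
private lemma length_one_edge {V : Type u} {G : SimpleGraph V} {a b : V}
    {W : G.Walk a b} (h : W.length = 1) : s(a, b) ∈ W.edges := by
  cases W with
  | nil => simp at h
  | @cons _ w _ hadj q =>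
    have hq : q.length = 0 := by simpa using h
    have := Walk.eq_of_length_eq_zero hq
    subst this
    simp

/-- Decompose a walk at two of its support vertices, in one order or the other. -/
private lemma walk_decomp {V : Type u} {G : SimpleGraph V} {a b x y : V}
    (W : G.Walk a b) (hx : x ∈ W.support) (hy : y ∈ W.support) :
    (∃ (P1 : G.Walk a x) (P2 : G.Walk x y) (P3 : G.Walk y b),
       W = (P1.append P2).append P3) ∨
    (∃ (P1 : G.Walk a y) (P2 : G.Walk y x) (P3 : G.Walk x b),
       W = (P1.append P2).append P3) := by
  classical
  by_cases hy2 : y ∈ (W.dropUntil x hx).support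
  · exact Or.inl ⟨W.takeUntil x hx, (W.dropUntil x hx).takeUntil y hy2,
      (W.dropUntil x hx).dropUntil y hy2, by
        rw [← Walk.append_assoc, Walk.take_spec, Walk.take_spec]⟩
  · have hy1 : y ∈ (W.takeUntil x hx).support := by
      have hspec := W.take_spec hx
      rw [← hspec, Walk.mem_support_append_iff] at hy
      tauto
    exact Or.inr ⟨(W.takeUntil x hx).takeUntil y hy1,
      (W.takeUntil x hx).dropUntil y hy1, W.dropUntil x hx, by
        rw [Walk.take_spec, Walk.take_spec]⟩

/-- Shortcut through a chord: given an adjacent pair on a walk whose edge is not used by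
the walk, there is a strictly shorter walk with the same endpoints. -/
private lemma shortcut_aux {V : Type u} {G : SimpleGraph V} {a b x y : V}
    (P1 : G.Walk a x) (P2 : G.Walk x y) (P3 : G.Walk y b)
    (hxy : G.Adj x y) (hne : s(x, y) ∉ ((P1.append P2).append P3).edges) :
    ∃ W' : G.Walk a b, W'.length < ((P1.append P2).append P3).length ∧
      (∀ z ∈ W'.support, z ∈ ((P1.append P2).append P3).support) ∧
      (∀ e ∈ W'.edges, e = s(x, y) ∨ e ∈ ((P1.append P2).append P3).edges) := by
  have h2 : 2 ≤ P2.length := by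
    by_contra h
    push_neg at h
    interval_cases h' : P2.length
    · exact hxy.ne (Walk.eq_of_length_eq_zero h')
    · exact hne (by
        simp only [Walk.edges_append, List.mem_append]
        exact Or.inl (Or.inr (length_one_edge h')))
  refine ⟨P1.append (Walk.cons hxy P3), ?_, ?_, ?_⟩
  · simp only [Walk.length_append, Walk.length_cons]
    omega
  · intro z hz
    rw [Walk.mem_support_append_iff, Walk.support_cons, List.mem_cons] at hz
    simp only [Walk.mem_support_append_iff]
    rcases hz with hz | hz | hz
    · exact Or.inl (Or.inl hz)
    · exact Or.inl (Or.inl (hz ▸ P1.end_mem_support))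
    · exact Or.inr hz
  · intro e hee
    rw [Walk.edges_append, Walk.edges_cons, List.mem_append, List.mem_cons] at hee
    simp only [Walk.edges_append, List.mem_append]
    rcases hee with hee | hee | hee
    · exact Or.inr (Or.inl (Or.inl hee))
    · exact Or.inl hee
    · exact Or.inr (Or.inr hee)

private lemma shortcut {V : Type u} {G : SimpleGraph V} {a b x y : V}
    (W : G.Walk a b) (hx : x ∈ W.support) (hy : y ∈ W.support)
    (hxy : G.Adj x y) (hne : s(x, y) ∉ W.edges) :
    ∃ W' : G.Walk a b, W'.length < W.length ∧
      (∀ z ∈ W'.support, z ∈ W.support) ∧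
      (∀ e ∈ W'.edges, e = s(x, y) ∨ e ∈ W.edges) := by
  rcases walk_decomp W hx hy with ⟨P1, P2, P3, rfl⟩ | ⟨P1, P2, P3, rfl⟩
  · exact shortcut_aux P1 P2 P3 hxy hne
  · have hne' : s(y, x) ∉ ((P1.append P2).append P3).edges := by
      rwa [Sym2.eq_swap] at hne
    obtain ⟨W', h1, h2, h3⟩ := shortcut_aux P1 P2 P3 hxy.symm hne'
    exact ⟨W', h1, h2, fun e hee => by
      rcases h3 e hee with h | h
      · exact Or.inl (by rw [h, Sym2.eq_swap])
      · exact Or.inr h⟩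

/-- In a hole-edge-disjoint graph, `S_{C,e} ≠ ∅` iff `T_{C,e} ≠ ∅`. -/
theorem Sset_nonempty_iff_Tset_nonempty
    {V : Type u} (G : SimpleGraph V) (hhed : HoleEdgeDisjoint G)
    {v : V} (c : G.Walk v v) (hc : IsHole G c)
    {a b : V} (he : s(a, b) ∈ c.edges) :
    (Sset G c a b).Nonempty ↔ (Tset G c a b).Nonempty := by
  classical
  have hab : G.Adj a b := c.adj_of_mem_edges he
  constructor
  · rintro ⟨w, W0, ⟨hp0, hint0, _⟩, hws, hwa, hwb⟩
    -- W0 has length at least 2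
    have hlen0 : 2 ≤ W0.length := by
      cases W0 with
      | nil => simp at hws; exact absurd hws hwa
      | cons h1 q =>
        cases q with
        | nil =>
          simp only [Walk.support_cons, Walk.support_nil, List.mem_cons,
            List.mem_singleton] at hws
          rcases hws with h | h | h
          · exact absurd h hwa
          · exact absurd h hwb
          · simp at h
        | cons h2 q2 => simp only [Walk.length_cons]; omega
    -- the set of lengths of C-avoiding a-b paths of length ≥ 2
    set P : Set ℕ := {n | ∃ W : G.Walk a b, (W.IsPath ∧
        (∀ x ∈ W.support, x ≠ a → x ≠ b → x ∉ avoidSet G c) ∧ 2 ≤ W.length) ∧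
        W.length = n} with hPdef
    have hPne : P.Nonempty := ⟨W0.length, W0, ⟨hp0, hint0, hlen0⟩, rfl⟩
    obtain ⟨W, ⟨hWp, hWint, hW2⟩, hWn⟩ := Nat.sInf_mem hPne
    set n := sInf P with hn
    -- s(a,b) is not an edge of W
    have hsab : s(a, b) ∉ W.edges := fun h => by
      have := path_edge_ends hWp h; omega
    -- claim: n = 2
    have hn2 : W.length = 2 := by
      by_contra hne2
      have hn3 : 3 ≤ W.length := by omega
      -- build the cycle D
      set D : G.Walk a a := Walk.cons hab W.reverse with hDdef
      have hcyc : D.IsCycle := by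
        rw [hDdef, Walk.cons_isCycle_iff]
        refine ⟨hWp.reverse, ?_⟩
        rw [Walk.edges_reverse, List.mem_reverse]
        exact hsab
      have hDlen : D.length = W.length + 1 := by simp [hDdef]
      have hDsupp : ∀ z, z ∈ D.support → z ∈ W.support := by
        intro z hz
        rw [hDdef, Walk.support_cons, List.mem_cons, Walk.support_reverse,
          List.mem_reverse] at hz
        rcases hz with rfl | hz
        · exact W.start_mem_support
        · exact hz
      -- D is a hole
      have hD : IsHole G D := by
        refine ⟨hcyc, by omega, ?_⟩
        intro x hxs y hys hadj
        by_contra hnotedge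
        have hxW : x ∈ W.support := hDsupp x hxs
        have hyW : y ∈ W.support := hDsupp y hys
        have hxyab : s(x, y) ≠ s(a, b) ∧ s(x, y) ∉ W.edges := by
          rw [hDdef, Walk.edges_cons, List.mem_cons, Walk.edges_reverse,
            List.mem_reverse] at hnotedge
          push_neg at hnotedge
          exact hnotedge
        obtain ⟨W', hlt, hsup, hedge⟩ := shortcut W hxW hyW hadj hxyab.2
        -- W'.bypass is a shorter C-avoiding path, contradiction with minimality
        set W'' := W'.bypass with hW''
        have hlt'' : W''.length < W.length :=
          lt_of_le_of_lt W'.length_bypass_le hlt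
        have hedge'' : ∀ e ∈ W''.edges, e = s(x, y) ∨ e ∈ W.edges :=
          fun e hee => hedge e (W'.edges_bypass_subset hee)
        have hlen'' : 2 ≤ W''.length := by
          rcases Nat.lt_or_ge W''.length 2 with h | h
          · interval_cases h' : W''.length
            · exact absurd (Walk.eq_of_length_eq_zero h') hab.ne
            · rcases hedge'' _ (length_one_edge h') with h | h
              · exact absurd h.symm hxyab.1
              · exact absurd h hsab
          · exact h
        have hmem : W''.length ∈ P := by
          refine ⟨W'', ⟨W'.bypass_isPath, ?_, hlen''⟩, rfl⟩
          intro z hz hza hzb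
          exact hWint z (hsup z (W'.support_bypass_subset hz)) hza hzb
        have := Nat.sInf_le hmem
        omega
      -- apply hole-edge-disjointness to C and D
      rcases hhed v a c D hc hD with hset | hdisj
      · -- edge sets equal: derive contradiction via the first edge of W
        cases W with
        | nil => simp at hn3
        | @cons _ w1 _ hA q =>
          have hw1b : w1 ≠ b := by
            intro h
            subst h
            exact hsab (by simp)
          have hw1av : w1 ∉ avoidSet G c :=
            hWint w1 (by simp) hA.ne' hw1b
          have haw1D : s(a, w1) ∈ D.edges := by
            rw [hDdef, Walk.edges_cons, List.mem_cons, Walk.edges_reverse,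
              List.mem_reverse]
            exact Or.inr (by simp)
          have haw1c : s(a, w1) ∈ c.edges := by
            have : s(a, w1) ∈ {e | e ∈ D.edges} := haw1D
            rw [← hset] at this
            exact this
          have : w1 ∈ c.support := c.snd_mem_support_of_mem_edges haw1c
          exact hw1av (Or.inl this)
      · exact hdisj (s(a, b)) he (by simp [hDdef])
    -- extract the middle vertex of the length-2 path
    clear hsab hWn hW2 hws hwa hwb hlen0
    cases W with
    | nil => simp at hn2
    | @cons _ w1 _ h1 q =>
      cases q with
      | nil => simp at hn2
      | @cons _ w2 _ h2 q2 =>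
        cases q2 with
        | nil =>
          exact ⟨w1, h1, h2, hWp, hWint, fun h => by simp at h⟩
        | cons h3 q3 => simp only [Walk.length_cons] at hn2; omega
  · rintro ⟨w, h₁, h₂, hW⟩
    exact ⟨w, Walk.cons h₁ (Walk.cons h₂ Walk.nil), hW, by simp, h₁.ne', h₂.ne⟩
end
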